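/- arXiv:2007.04312 — 9 statements merged into one kernel-verified Lean document; each statement's English description precedes it below -/
import Mathlib

section
/- Let b ≥ 2 be an integer, λ ∈ (1/b, 1), and φ(x) = cos(2πx + θ) for some θ ∈ ℝ. Then the function W(x) = ∑_{n=0}^∞ λ^n φ(b^n x) is not real analytic. (More precisely: W cannot have exponentially decaying Fourier coefficients, since the b^k-th Fourier coefficient of W has absolute value (λ^k + 1)/2, which does not tend to 0 as k → ∞.) -/
open Real intervalIntegral

private lemma cos_int_integral (a c : ℝ) (m : ℤ) (hm : m ≠ 0) (ha : a = m) :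
    ∫ x in (0:ℝ)..1, Real.cos (2 * π * a * x + c) = 0 := by
  subst ha
  have h2 : (2 * π * m : ℝ) ≠ 0 := by
    have h1 : (m : ℝ) ≠ 0 := Int.cast_ne_zero.mpr hm
    have := Real.pi_ne_zero
    positivity
  rw [integral_comp_mul_add Real.cos h2 c (a := 0) (b := 1),
    integral_cos]
  have : Real.sin (2 * π * m * 1 + c) = Real.sin (2 * π * m * 0 + c) := by
    rw [mul_one, mul_zero, zero_add]
    rw [show 2 * π * (m:ℝ) + c = c + m * (2 * π) by ring]
    exact Real.sin_add_int_mul_two_pi c m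
  rw [this, sub_self, smul_zero]

private lemma orth (b : ℕ) (hb : 2 ≤ b) (θ : ℝ) (n k : ℕ) :
    ∫ x in (0:ℝ)..1,
      Real.cos (2 * π * ((b:ℝ) ^ n * x) + θ) * Real.cos (2 * π * ((b:ℝ) ^ k * x) + θ)
      = if n = k then 1/2 else 0 := by
  have key : ∀ x : ℝ,
      Real.cos (2 * π * ((b:ℝ) ^ n * x) + θ) * Real.cos (2 * π * ((b:ℝ) ^ k * x) + θ)
      = (Real.cos (2 * π * ((b:ℝ)^n - (b:ℝ)^k) * x + 0)
         + Real.cos (2 * π * ((b:ℝ)^n + (b:ℝ)^k) * x + 2*θ)) / 2 := by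
    intro x
    have := Real.two_mul_cos_mul_cos (2 * π * ((b:ℝ) ^ n * x) + θ) (2 * π * ((b:ℝ) ^ k * x) + θ)
    have e1 : (2 * π * ((b:ℝ) ^ n * x) + θ) - (2 * π * ((b:ℝ) ^ k * x) + θ)
        = 2 * π * ((b:ℝ)^n - (b:ℝ)^k) * x + 0 := by ring
    have e2 : (2 * π * ((b:ℝ) ^ n * x) + θ) + (2 * π * ((b:ℝ) ^ k * x) + θ)
        = 2 * π * ((b:ℝ)^n + (b:ℝ)^k) * x + 2*θ := by ring
    rw [e1, e2] at this
    linarith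
  simp_rw [key]
  have hI2 : ∫ x in (0:ℝ)..1, Real.cos (2 * π * ((b:ℝ)^n + (b:ℝ)^k) * x + 2*θ) = 0 := by
    have hpos : 0 < b ^ n + b ^ k := by positivity
    exact cos_int_integral _ _ ((b^n + b^k : ℕ) : ℤ) (by exact_mod_cast hpos.ne')
      (by push_cast; ring)
  by_cases hnk : n = k
  · subst hnk
    simp only [sub_self, mul_zero, zero_mul, zero_add, Real.cos_zero, if_pos rfl]
    rw [integral_div,
      integral_add intervalIntegrable_const
        (Continuous.intervalIntegrable (by fun_prop) _ _),
      hI2, integral_const]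
    norm_num
  · rw [if_neg hnk]
    have hdiff : ∫ x in (0:ℝ)..1, Real.cos (2 * π * ((b:ℝ)^n - (b:ℝ)^k) * x + 0) = 0 := by
      have hm : ((b^n : ℤ) - (b^k : ℤ)) ≠ 0 := by
        intro h
        apply hnk
        have h' : b ^ n = b ^ k := by exact_mod_cast sub_eq_zero.mp h
        exact Nat.pow_right_injective hb h'
      exact cos_int_integral _ _ _ hm (by push_cast; ring)
    rw [integral_div,
      integral_add (Continuous.intervalIntegrable (by fun_prop) _ _)
        (Continuous.intervalIntegrable (by fun_prop) _ _),
      hdiff, hI2]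
    norm_num

/-- For `φ(x) = cos(2πx + θ)`, the Weierstrass-type function
`W(x) = ∑ λⁿ cos(2π bⁿ x + θ)` is not real analytic. -/
theorem stmt_1 (b : ℕ) (hb : 2 ≤ b) (lam : ℝ) (hlam : 1 / b < lam ∧ lam < 1) (θ : ℝ)
    (W : ℝ → ℝ)
    (hW : ∀ x, W x = ∑' n : ℕ, lam ^ n * Real.cos (2 * Real.pi * ((b : ℝ) ^ n * x) + θ)) :
    ¬ AnalyticOnNhd ℝ W Set.univ := by
  intro hA
  have hb0 : (0:ℝ) < b := by positivity
  have hlam0 : 0 < lam := lt_trans (by positivity) hlam.1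
  have hbl : 1 < (b:ℝ) * lam := by
    have := (div_lt_iff₀ hb0).mp hlam.1
    linarith
  have hWd : ∀ x : ℝ, HasDerivAt W (deriv W x) x := fun x =>
    ((hA x (Set.mem_univ x)).differentiableAt).hasDerivAt
  have hW'c : Continuous (deriv W) :=
    continuousOn_univ.mp hA.deriv.continuousOn
  have hWc : Continuous W := continuousOn_univ.mp hA.continuousOn
  -- Fourier coefficient computation
  have hcoef : ∀ k : ℕ,
      ∫ x in (0:ℝ)..1, W x * Real.cos (2 * π * ((b:ℝ) ^ k * x) + θ) = lam ^ k / 2 := by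
    intro k
    set F : ℕ → C(ℝ, ℝ) := fun n =>
      ⟨fun x => lam ^ n * Real.cos (2 * π * ((b:ℝ) ^ n * x) + θ)
        * Real.cos (2 * π * ((b:ℝ) ^ k * x) + θ), by fun_prop⟩ with hF
    have habs : ∀ n : ℕ, ∀ y : ℝ, |lam ^ n * Real.cos (2 * π * ((b:ℝ) ^ n * y) + θ)
        * Real.cos (2 * π * ((b:ℝ) ^ k * y) + θ)| ≤ lam ^ n := by
      intro n y
      rw [abs_mul, abs_mul, abs_pow, abs_of_pos hlam0]
      have h1 := Real.abs_cos_le_one (2 * π * ((b:ℝ) ^ n * y) + θ)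
      have h2 := Real.abs_cos_le_one (2 * π * ((b:ℝ) ^ k * y) + θ)
      have h3 : (0:ℝ) ≤ lam ^ n := by positivity
      calc lam ^ n * |Real.cos (2 * π * ((b:ℝ) ^ n * y) + θ)|
            * |Real.cos (2 * π * ((b:ℝ) ^ k * y) + θ)| ≤ lam ^ n * 1 * 1 :=
            mul_le_mul (mul_le_mul le_rfl h1 (abs_nonneg _) h3) h2 (abs_nonneg _) (by positivity)
        _ = lam ^ n := by ring
    have hsum : Summable fun n : ℕ =>
        ‖(F n).restrict (⟨Set.uIcc (0:ℝ) 1, isCompact_uIcc⟩ : TopologicalSpace.Compacts ℝ)‖ := by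
      apply Summable.of_nonneg_of_le (fun n => norm_nonneg _) (fun n => ?_)
        (summable_geometric_of_lt_one hlam0.le hlam.2)
      apply (ContinuousMap.norm_le _ (by positivity)).mpr
      intro x
      rw [ContinuousMap.restrict_apply]
      simp only [ContinuousMap.coe_mk, F, Real.norm_eq_abs]
      exact habs n x
    have hHS := hasSum_intervalIntegral_of_summable_norm (a := 0) (b := 1) hsum
    have hWg : ∀ x : ℝ, ∑' n : ℕ, (F n) x
        = W x * Real.cos (2 * π * ((b:ℝ) ^ k * x) + θ) := by
      intro x
      rw [hW x]
      simp only [ContinuousMap.coe_mk, F]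
      exact tsum_mul_right
    have hterm : ∀ n : ℕ, (∫ x in (0:ℝ)..1, (F n) x) = if n = k then lam ^ k / 2 else 0 := by
      intro n
      have hFnx : ∀ x : ℝ, (F n) x = lam ^ n * (Real.cos (2 * π * ((b:ℝ)^n*x)+θ)
          * Real.cos (2 * π * ((b:ℝ)^k*x)+θ)) := fun x => by
        simp only [ContinuousMap.coe_mk, F]; ring
      simp_rw [hFnx]
      rw [integral_const_mul, orth b hb θ n k]
      split_ifs with h
      · subst h; ring
      · ring
    simp_rw [hWg, hterm] at hHS
    rw [← hHS.tsum_eq, (hasSum_ite_eq k (lam ^ k / 2)).tsum_eq]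
  -- periodicity
  have hper : W 1 = W 0 := by
    rw [hW 1, hW 0]
    congr 1
    ext n
    congr 1
    rw [mul_one, mul_zero, mul_zero, zero_add]
    rw [show 2 * π * (b:ℝ)^n + θ = θ + ((b^n : ℕ) : ℤ) * (2 * π) by push_cast; ring]
    exact Real.cos_add_int_mul_two_pi θ _
  -- integration by parts
  have hparts : ∀ k : ℕ,
      ∫ x in (0:ℝ)..1, deriv W x * Real.sin (2 * π * ((b:ℝ) ^ k * x) + θ)
        = -(π * ((b:ℝ) * lam) ^ k) := by
    intro k
    set c : ℝ := 2 * π * (b:ℝ) ^ k with hc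
    have hFd : ∀ x ∈ Set.uIcc (0:ℝ) 1,
        HasDerivAt (fun x => W x * Real.sin (2 * π * ((b:ℝ) ^ k * x) + θ))
          (deriv W x * Real.sin (2 * π * ((b:ℝ) ^ k * x) + θ)
            + W x * (Real.cos (2 * π * ((b:ℝ) ^ k * x) + θ) * c)) x := by
      intro x _
      have h1 : HasDerivAt (fun x : ℝ => 2 * π * ((b:ℝ) ^ k * x) + θ) c x := by
        have := (((hasDerivAt_id x).const_mul ((b:ℝ)^k)).const_mul (2*π)).add_const θ
        simpa [hc, mul_assoc, mul_one] using this
      have h2 := (Real.hasDerivAt_sin (2 * π * ((b:ℝ) ^ k * x) + θ)).comp x h1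
      exact (hWd x).mul h2
    have hint : IntervalIntegrable
        (fun x => deriv W x * Real.sin (2 * π * ((b:ℝ) ^ k * x) + θ)
          + W x * (Real.cos (2 * π * ((b:ℝ) ^ k * x) + θ) * c)) MeasureTheory.volume 0 1 :=
      Continuous.intervalIntegrable (by fun_prop) _ _
    have heq := integral_eq_sub_of_hasDerivAt hFd hint
    have hzero : W 1 * Real.sin (2 * π * ((b:ℝ) ^ k * 1) + θ)
        - W 0 * Real.sin (2 * π * ((b:ℝ) ^ k * 0) + θ) = 0 := by
      rw [hper, mul_one, mul_zero, mul_zero, zero_add]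
      rw [show 2 * π * (b:ℝ)^k + θ = θ + ((b^k : ℕ) : ℤ) * (2 * π) by push_cast; ring]
      rw [Real.sin_add_int_mul_two_pi]
      ring
    rw [hzero] at heq
    rw [integral_add
      (Continuous.intervalIntegrable (by fun_prop) _ _)
      (Continuous.intervalIntegrable (by fun_prop) _ _)] at heq
    have h3 : ∫ x in (0:ℝ)..1, W x * (Real.cos (2 * π * ((b:ℝ) ^ k * x) + θ) * c)
        = c * (lam ^ k / 2) := by
      simp_rw [show ∀ x : ℝ, W x * (Real.cos (2 * π * ((b:ℝ) ^ k * x) + θ) * c)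
          = c * (W x * Real.cos (2 * π * ((b:ℝ) ^ k * x) + θ)) from fun x => by ring]
      rw [integral_const_mul, hcoef k]
    rw [h3] at heq
    have h4 : c * (lam ^ k / 2) = π * ((b:ℝ) * lam) ^ k := by
      rw [hc, mul_pow]; ring
    linarith
  -- boundedness and contradiction
  obtain ⟨M, hM⟩ := (isCompact_Icc (a := (0:ℝ)) (b := 1)).exists_bound_of_continuousOn
    hW'c.continuousOn
  have hbound : ∀ k : ℕ, π * ((b:ℝ) * lam) ^ k ≤ M := by
    intro k
    have hle := norm_integral_le_of_norm_le_const (a := 0) (b := 1) (C := M)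
      (f := fun x => deriv W x * Real.sin (2 * π * ((b:ℝ) ^ k * x) + θ)) ?_
    · rw [hparts k] at hle
      rw [norm_neg, Real.norm_eq_abs, abs_of_nonneg (by positivity)] at hle
      simpa using hle
    · intro x hx
      have hx' : x ∈ Set.Icc (0:ℝ) 1 :=
        Set.Ioc_subset_Icc_self (by rwa [Set.uIoc_of_le zero_le_one] at hx)
      rw [Real.norm_eq_abs, abs_mul]
      have hMx := hM x hx'
      have h1 := Real.abs_sin_le_one (2 * π * ((b:ℝ) ^ k * x) + θ)
      calc |deriv W x| * |Real.sin (2 * π * ((b:ℝ) ^ k * x) + θ)| ≤ M * 1 :=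
            mul_le_mul hMx h1 (abs_nonneg _) (le_trans (abs_nonneg _) hMx)
        _ = M := mul_one M
  have htend : Filter.Tendsto (fun k : ℕ => π * ((b:ℝ) * lam) ^ k) Filter.atTop Filter.atTop :=
    Filter.Tendsto.const_mul_atTop Real.pi_pos (tendsto_pow_atTop_atTop_of_one_lt hbl)
  obtain ⟨k, hk⟩ := (htend.eventually_gt_atTop M).exists
  exact absurd (hbound k) (not_le.mpr hk)
end

section
/- Let b ≥ 2 be an integer, λ ∈ (1/b,1), and φ : ℝ → ℝ a ℤ-periodic C^k function for some k ≥ 1. If W(x) = ∑_{n≥0} λ^n φ(b^n x) is Lipschitz, then W is C^k. -/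
open Set MeasureTheory Filter Topology intervalIntegral



/-- If `a ≤ b` and `h` is Lipschitz with a.e. vanishing derivative, then `h a ≤ h b`. -/
lemma le_of_lip_ae_deriv_zero {h : ℝ → ℝ} {L : NNReal} (hl : LipschitzWith L h)
    (hd : ∀ᵐ x, HasDerivAt h 0 x) {a b : ℝ} (hab : a ≤ b) : h a ≤ h b := by
  set f : ℝ → ℝ := fun x => (L : ℝ) * x + h x with hf
  have hm : Monotone f := by
    intro x y hxy
    have h1 : |h x - h y| ≤ (L : ℝ) * (y - x) := by
      have := hl.dist_le_mul x y
      rwa [Real.dist_eq, Real.dist_eq, abs_sub_comm x y,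
        abs_of_nonneg (sub_nonneg.2 hxy)] at this
    have := abs_le.1 h1
    simp only [hf]
    nlinarith [this.1, this.2]
  have hcont : Continuous f := by
    have := hl.continuous
    continuity
  set μ := hm.stieltjesFunction.measure with hμ
  have hderiv : ∀ᵐ x, HasDerivAt f (L : ℝ) x := by
    filter_upwards [hd] with x hx
    exact (((hasDerivAt_id x).const_mul (L : ℝ)).add hx).congr_deriv (by simp)
  have hrn : ∀ᵐ x, (μ.rnDeriv volume x) = ENNReal.ofReal (L : ℝ) := by
    filter_upwards [hm.ae_hasDerivAt, hderiv, μ.rnDeriv_lt_top volume] with x h1 h2 h3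
    have : (μ.rnDeriv volume x).toReal = (L : ℝ) := h1.unique h2
    rw [← ENNReal.ofReal_toReal h3.ne, this]
  have hS : ∀ x, hm.stieltjesFunction x = f x := by
    intro x
    rw [hm.stieltjesFunction_eq]
    exact rightLim_eq_of_tendsto
      ((hcont.tendsto x).mono_left nhdsWithin_le_nhds)
  have key : ENNReal.ofReal ((L : ℝ) * (b - a)) ≤ ENNReal.ofReal (f b - f a) := by
    calc ENNReal.ofReal ((L : ℝ) * (b - a))
        = ∫⁻ _ in Ioc a b, ENNReal.ofReal (L : ℝ) := by
          rw [setLIntegral_const, Real.volume_Ioc,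
            ← ENNReal.ofReal_mul L.coe_nonneg]
      _ = ∫⁻ x in Ioc a b, μ.rnDeriv volume x := by
          exact (lintegral_congr_ae (ae_restrict_of_ae hrn)).symm
      _ ≤ μ (Ioc a b) := Measure.setLIntegral_rnDeriv_le _
      _ = ENNReal.ofReal (hm.stieltjesFunction b - hm.stieltjesFunction a) :=
          hm.stieltjesFunction.measure_Ioc a b
      _ = ENNReal.ofReal (f b - f a) := by rw [hS, hS]
  have h2 : (L : ℝ) * (b - a) ≤ f b - f a :=
    (ENNReal.ofReal_le_ofReal_iff (by simpa using sub_nonneg.2 (hm hab))).1 key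
  simp only [hf] at h2
  linarith

lemma const_of_lip_ae_deriv_zero {h : ℝ → ℝ} {L : NNReal} (hl : LipschitzWith L h)
    (hd : ∀ᵐ x, HasDerivAt h 0 x) (x : ℝ) : h x = h 0 := by
  have hneg : ∀ᵐ y, HasDerivAt (fun z => -h z) 0 y := by
    filter_upwards [hd] with y hy; exact hy.neg.congr_deriv neg_zero
  have hmain : ∀ a b : ℝ, a ≤ b → h a = h b := fun a b hab =>
    le_antisymm (le_of_lip_ae_deriv_zero hl hd hab)
      (by
        have := le_of_lip_ae_deriv_zero (h := fun z => -h z) hl.neg hneg hab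
        simp only [neg_le_neg_iff] at this
        linarith)
  rcases le_total x 0 with hx | hx
  · exact hmain x 0 hx
  · exact (hmain 0 x hx).symm



lemma iteratedDeriv_periodic {φ : ℝ → ℝ} (hφp : ∀ x, φ (x + 1) = φ x) (j : ℕ) :
    ∀ x, iteratedDeriv j φ (x + 1) = iteratedDeriv j φ x := by
  induction j with
  | zero => simpa using hφp
  | succ j ih =>
    intro x
    have hfun : (fun y => iteratedDeriv j φ (y + 1)) = iteratedDeriv j φ := funext ih
    rw [iteratedDeriv_succ]
    conv_lhs => rw [← deriv_comp_add_const, hfun]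

/-- Each iterated derivative (order ≤ k) of a periodic Cᵏ function is uniformly bounded. -/
lemma bound_of_periodic_contDiff {φ : ℝ → ℝ} {k : ℕ} (hφ : ContDiff ℝ k φ)
    (hφp : ∀ x, φ (x + 1) = φ x) :
    ∃ M : ℝ, 0 ≤ M ∧ ∀ j ≤ k, ∀ x, |iteratedDeriv j φ x| ≤ M := by
  have hbd : ∀ j, ∃ C, j ≤ k → ∀ x, |iteratedDeriv j φ x| ≤ C := by
    intro j
    by_cases hj : j ≤ k
    swap
    · exact ⟨0, fun h => absurd h hj⟩
    have hcont : Continuous (iteratedDeriv j φ) :=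
      hφ.continuous_iteratedDeriv j (by exact_mod_cast hj)
    obtain ⟨C, hC⟩ := (isCompact_Icc (a := (0:ℝ)) (b := 1)).exists_bound_of_continuousOn
      hcont.continuousOn
    refine ⟨C, fun _ x => ?_⟩
    have hper : Function.Periodic (iteratedDeriv j φ) 1 := iteratedDeriv_periodic hφp j
    have h2 : iteratedDeriv j φ (Int.fract x) = iteratedDeriv j φ x := by
      have h4 := hper.sub_int_mul_eq (x := x) ⌊x⌋
      rw [mul_one] at h4
      rw [Int.fract]
      exact h4
    have h3 : Int.fract x ∈ Icc (0:ℝ) 1 :=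
      ⟨Int.fract_nonneg x, (Int.fract_lt_one x).le⟩
    calc |iteratedDeriv j φ x| = ‖iteratedDeriv j φ (Int.fract x)‖ := by
          rw [h2]; rfl
      _ ≤ _ := hC _ h3
  choose C hC using hbd
  classical
  refine ⟨∑ j ∈ Finset.range (k+1), max (C j) 0,
    Finset.sum_nonneg fun j _ => le_max_right _ _, fun j hj x => ?_⟩
  calc |iteratedDeriv j φ x| ≤ C j := hC j hj x
    _ ≤ max (C j) 0 := le_max_left _ _
    _ ≤ ∑ i ∈ Finset.range (k+1), max (C i) 0 :=
        Finset.single_le_sum (f := fun i => max (C i) 0)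
          (fun i _ => le_max_right _ _) (Finset.mem_range.2 (Nat.lt_succ_of_le hj))



lemma iteratedDeriv_const_mul'' {j : ℕ} {f : ℝ → ℝ} (h : ContDiff ℝ j f) (c : ℝ) (x : ℝ) :
    iteratedDeriv j (fun y => c * f y) x = c * iteratedDeriv j f x := by
  simp only [← iteratedDerivWithin_univ]
  exact iteratedDerivWithin_const_mul (mem_univ x) uniqueDiffOn_univ c h.contDiffAt.contDiffWithinAt

lemma g_contDiff {ψ : ℝ → ℝ} {m : ℕ} (hψ : ContDiff ℝ m ψ) {M : ℝ}
    (hM : ∀ j ≤ m, ∀ x, |iteratedDeriv j ψ x| ≤ M)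
    {B γ : ℝ} (hB : 1 ≤ B) (hγ0 : 0 ≤ γ) (hγ1 : γ < 1) :
    ContDiff ℝ m (fun x => ∑' n : ℕ, -(γ ^ (n+1) * ψ (x / B ^ (n+1)))) := by
  have hM0 : 0 ≤ M := le_trans (abs_nonneg _) (hM 0 (Nat.zero_le m) 0)
  have hBpos : ∀ n : ℕ, 0 < B ^ n := fun n => pow_pos (lt_of_lt_of_le one_pos hB) n
  have hrw : (fun x => ∑' n : ℕ, -(γ ^ (n+1) * ψ (x / B ^ (n+1))))
      = fun x => ∑' n : ℕ, (fun n x => -(γ ^ (n+1) * ψ ((B ^ (n+1))⁻¹ * x))) n x := by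
    funext x
    congr 1
    funext n
    rw [div_eq_inv_mul]
  rw [hrw]
  have key : ContDiff ℝ ((m : ℕ∞) : WithTop ℕ∞)
      fun x => ∑' n : ℕ, (fun n x => -(γ ^ (n+1) * ψ ((B ^ (n+1))⁻¹ * x))) n x := by
    apply contDiff_tsum (v := fun _ n => M * γ ^ (n+1))
    · intro n
      exact ((contDiff_const.mul (hψ.comp (contDiff_const.mul contDiff_id))).neg :)
    · intro j _
      have : Summable fun n : ℕ => (M * γ) * γ ^ n :=
        (summable_geometric_of_lt_one hγ0 hγ1).mul_left _
      exact this.congr fun n => by ring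
    · intro j n x hj
      have hj' : j ≤ m := by exact_mod_cast hj
      rw [norm_iteratedFDeriv_eq_norm_iteratedDeriv]
      have e1 : (fun x => -(γ ^ (n+1) * ψ ((B ^ (n+1))⁻¹ * x)))
          = fun x => (fun y => -γ ^ (n+1) * ψ y) ((B ^ (n+1))⁻¹ * x) := by
        funext y; ring_nf
      have hψj : ContDiff ℝ j ψ := hψ.of_le (show (j : WithTop ℕ∞) ≤ m by exact_mod_cast hj')
      have hcd : ContDiff ℝ j (fun y => -γ ^ (n+1) * ψ y) := contDiff_const.mul hψj
      have e2 : iteratedDeriv j (fun y => -γ ^ (n+1) * ψ y) ((B ^ (n+1))⁻¹ * x)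
          = -γ ^ (n+1) * iteratedDeriv j ψ ((B ^ (n+1))⁻¹ * x) :=
        iteratedDeriv_const_mul'' hψj _ _
      rw [e1, iteratedDeriv_comp_const_smul hcd]
      simp only [smul_eq_mul, e2]
      have hc : |((B ^ (n+1))⁻¹ : ℝ)| ≤ 1 := by
        rw [abs_of_pos (inv_pos.2 (hBpos (n+1)))]
        exact inv_le_one_of_one_le₀ (one_le_pow₀ hB)
      calc ‖((B ^ (n+1))⁻¹) ^ j * (-γ ^ (n+1) * iteratedDeriv j ψ ((B ^ (n+1))⁻¹ * x))‖
          = |((B ^ (n+1))⁻¹)| ^ j * (γ ^ (n+1) * |iteratedDeriv j ψ ((B ^ (n+1))⁻¹ * x)|) := by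
            rw [Real.norm_eq_abs, abs_mul, abs_mul, abs_pow, abs_neg, abs_pow,
              abs_of_nonneg hγ0]
        _ ≤ 1 ^ j * (γ ^ (n+1) * M) := by
            apply mul_le_mul (pow_le_pow_left₀ (abs_nonneg _) hc j)
            · exact mul_le_mul_of_nonneg_left (hM j hj' _) (pow_nonneg hγ0 _)
            · positivity
            · positivity
        _ = M * γ ^ (n+1) := by ring
  exact_mod_cast key


/-- If `φ` is ℤ-periodic and `Cᵏ` and `W(x) = ∑ λⁿ φ(bⁿ x)` is Lipschitz, then `W` is `Cᵏ`. -/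
theorem stmt_3 (b : ℕ) (hb : 2 ≤ b) (lam : ℝ) (hlam : 1 / b < lam ∧ lam < 1)
    (k : ℕ) (hk : 1 ≤ k) (φ : ℝ → ℝ) (hφ : ContDiff ℝ k φ) (hφp : ∀ x, φ (x + 1) = φ x)
    (W : ℝ → ℝ) (hW : ∀ x, W x = ∑' n : ℕ, lam ^ n * φ ((b : ℝ) ^ n * x))
    (K : NNReal) (hLip : LipschitzWith K W) :
    ContDiff ℝ k W := by
  classical
  obtain ⟨hlam1, hlam2⟩ := hlam
  set B : ℝ := (b : ℝ) with hBdef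
  have hB2 : (2:ℝ) ≤ B := by rw [hBdef]; exact_mod_cast hb
  have hB1 : (1:ℝ) ≤ B := by linarith
  have hB0 : (0:ℝ) < B := by linarith
  have hlam0 : 0 < lam := lt_trans (by positivity) hlam1
  have hBlam : 1 < B * lam := by
    calc (1:ℝ) = B * (1 / B) := by field_simp
      _ < B * lam := by exact mul_lt_mul_of_pos_left hlam1 hB0
  set γ : ℝ := (B * lam)⁻¹ with hγdef
  have hγ0 : 0 < γ := by rw [hγdef]; positivity
  have hγ1 : γ < 1 := by rw [hγdef, inv_lt_one_iff₀]; right; exact hBlam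
  obtain ⟨m, hm⟩ : ∃ m, k = m + 1 := ⟨k - 1, by omega⟩
  -- bounds on iterated derivatives of φ
  obtain ⟨M, hM0, hM⟩ := bound_of_periodic_contDiff hφ hφp
  have hφM : ∀ x, |φ x| ≤ M := by
    intro x; have := hM 0 (Nat.zero_le k) x; simpa using this
  have hφd : Differentiable ℝ φ := hφ.differentiable (by exact_mod_cast (show k ≠ 0 by omega))
  set ψ : ℝ → ℝ := deriv φ with hψdef
  have hψ : ContDiff ℝ m ψ := by
    have hφ' : ContDiff ℝ ((m : WithTop ℕ∞) + 1) φ := by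
      rw [hm] at hφ; exact_mod_cast hφ
    exact (contDiff_succ_iff_deriv.1 hφ').2.2
  have hψM : ∀ j ≤ m, ∀ x, |iteratedDeriv j ψ x| ≤ M := by
    intro j hj x
    rw [hψdef, ← iteratedDeriv_succ']
    exact hM (j+1) (by omega) x
  have hψb : ∀ x, |ψ x| ≤ M := by
    intro x; have := hψM 0 (Nat.zero_le m) x; simpa using this
  -- the candidate derivative g
  set g : ℝ → ℝ := fun x => ∑' n : ℕ, -(γ ^ (n+1) * ψ (x / B ^ (n+1))) with hgdef
  have hg : ContDiff ℝ m g := g_contDiff hψ hψM hB1 hγ0.le hγ1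
  have hsumgeo : Summable fun n : ℕ => M * γ ^ (n+1) := by
    have : Summable fun n : ℕ => (M * γ) * γ ^ n :=
      (summable_geometric_of_lt_one hγ0.le hγ1).mul_left _
    exact this.congr fun n => by ring
  have htermb : ∀ x, ∀ n : ℕ, ‖γ ^ (n+1) * ψ (x / B ^ (n+1))‖ ≤ M * γ ^ (n+1) := by
    intro x n
    rw [Real.norm_eq_abs, abs_mul, abs_pow, abs_of_pos hγ0]
    calc γ ^ (n+1) * |ψ (x / B ^ (n+1))| ≤ γ ^ (n+1) * M :=
          mul_le_mul_of_nonneg_left (hψb _) (by positivity)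
      _ = M * γ ^ (n+1) := by ring
  have hsummg : ∀ x, Summable fun n : ℕ => γ ^ (n+1) * ψ (x / B ^ (n+1)) := by
    intro x
    exact Summable.of_norm_bounded hsumgeo (htermb x)
  -- bound on g
  set Cg : ℝ := ∑' n : ℕ, M * γ ^ (n+1) with hCgdef
  have hCg0 : 0 ≤ Cg := tsum_nonneg fun n => by positivity
  have hgb : ∀ x, |g x| ≤ Cg := by
    intro x
    have hns : Summable fun n : ℕ => ‖-(γ ^ (n+1) * ψ (x / B ^ (n+1)))‖ :=
      ((hsummg x).abs).congr fun n => by rw [Real.norm_eq_abs, abs_neg]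
    rw [← Real.norm_eq_abs]
    simp only [hgdef]
    refine le_trans (norm_tsum_le_tsum_norm hns) (Summable.tsum_le_tsum (fun n => ?_) hns hsumgeo)
    rw [norm_neg]
    exact htermb x n
  -- functional equation
  have hsum : ∀ x, Summable fun n : ℕ => lam ^ n * φ (B ^ n * x) := by
    intro x
    apply Summable.of_norm_bounded
      ((summable_geometric_of_lt_one hlam0.le hlam2).mul_left M)
    intro n
    rw [Real.norm_eq_abs, abs_mul, abs_pow, abs_of_pos hlam0]
    calc lam ^ n * |φ (B ^ n * x)| ≤ lam ^ n * M :=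
          mul_le_mul_of_nonneg_left (hφM _) (by positivity)
      _ = M * lam ^ n := by ring
  have hfe : ∀ x, W x = φ x + lam * W (B * x) := by
    intro x
    rw [hW x, hW (B * x), ← tsum_mul_left, Summable.tsum_eq_zero_add (hsum x)]
    congr 1
    · simp
    · congr 1
      funext n
      have harg : B ^ (n+1) * x = B ^ n * (B * x) := by rw [pow_succ]; ring
      rw [harg, pow_succ]
      ring
  have hfe2 : ∀ y, W y = (W (y / B) - φ (y / B)) / lam := by
    intro y
    have h1 := hfe (y / B)
    rw [mul_div_cancel₀ y hB0.ne'] at h1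
    rw [h1]
    field_simp
    ring
  -- derivative propagation step
  have hstep : ∀ x : ℝ, DifferentiableAt ℝ W (x / B) →
      HasDerivAt W (γ * (deriv W (x / B) - ψ (x / B))) x := by
    intro x hd
    have hWfun : W = fun y => (W (y / B) - φ (y / B)) / lam := funext hfe2
    have h1 : HasDerivAt (fun y : ℝ => y / B) (1 / B) x := by
      simpa using (hasDerivAt_id x).div_const B
    have h2 : HasDerivAt (fun y => W (y / B)) (deriv W (x / B) * (1 / B)) x :=
      HasDerivAt.comp x hd.hasDerivAt h1
    have h3 : HasDerivAt (fun y => φ (y / B)) (ψ (x / B) * (1 / B)) x :=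
      HasDerivAt.comp x (hφd (x / B)).hasDerivAt h1
    have h4 := (h2.sub h3).div_const lam
    have h5 : HasDerivAt W ((deriv W (x / B) * (1 / B) - ψ (x / B) * (1 / B)) / lam) x :=
      h4.congr_of_eventuallyEq (Eventually.of_forall hfe2)
    convert h5 using 1
    rw [hγdef]
    field_simp
  -- a.e. differentiability along all scales
  have hae : ∀ᵐ x, ∀ n : ℕ, DifferentiableAt ℝ W (x / B ^ (n+1)) := by
    rw [ae_all_iff]
    intro n
    have hnull : volume {y : ℝ | ¬ DifferentiableAt ℝ W y} = 0 :=
      ae_iff.1 (hLip.ae_differentiableAt (μ := volume))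
    rw [ae_iff]
    have hset : {x : ℝ | ¬ DifferentiableAt ℝ W (x / B ^ (n+1))}
        = (fun x : ℝ => (B ^ (n+1))⁻¹ * x) ⁻¹' {y : ℝ | ¬ DifferentiableAt ℝ W y} := by
      ext x
      simp [div_eq_inv_mul]
    rw [hset, Real.volume_preimage_mul_left (inv_ne_zero (pow_ne_zero _ hB0.ne')), hnull,
      mul_zero]
  -- main a.e. derivative identity
  have hWg : ∀ᵐ x, HasDerivAt W (g x) x := by
    filter_upwards [hae] with x hx
    have hiter : ∀ N : ℕ, HasDerivAt W
        (γ ^ N * deriv W (x / B ^ N)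
          - ∑ i ∈ Finset.range N, γ ^ (i+1) * ψ (x / B ^ (i+1))) x := by
      intro N
      induction N with
      | zero =>
        have h0 := hstep x (by simpa using hx 0)
        simpa using h0.differentiableAt.hasDerivAt
      | succ N ih =>
        have hdd : x / B ^ N / B = x / B ^ (N+1) := by
          rw [div_div, ← pow_succ]
        have hs := hstep (x / B ^ N) (by rw [hdd]; exact hx N)
        rw [hdd] at hs
        have hval : γ ^ N * deriv W (x / B ^ N)
              - ∑ i ∈ Finset.range N, γ ^ (i+1) * ψ (x / B ^ (i+1))
            = γ ^ (N+1) * deriv W (x / B ^ (N+1))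
              - ∑ i ∈ Finset.range (N+1), γ ^ (i+1) * ψ (x / B ^ (i+1)) := by
          rw [hs.deriv, Finset.sum_range_succ]
          ring
        exact hval ▸ ih
    have hten1 : Tendsto (fun N : ℕ => γ ^ N * deriv W (x / B ^ N)
        - ∑ i ∈ Finset.range N, γ ^ (i+1) * ψ (x / B ^ (i+1))) atTop (𝓝 (deriv W x)) := by
      have heq : (fun N : ℕ => γ ^ N * deriv W (x / B ^ N)
          - ∑ i ∈ Finset.range N, γ ^ (i+1) * ψ (x / B ^ (i+1)))
          = fun _ => deriv W x := funext fun N => ((hiter N).deriv).symm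
      rw [heq]
      exact tendsto_const_nhds
    have hten2 : Tendsto (fun N : ℕ => γ ^ N * deriv W (x / B ^ N)
        - ∑ i ∈ Finset.range N, γ ^ (i+1) * ψ (x / B ^ (i+1))) atTop (𝓝 (g x)) := by
      have hd1 : Tendsto (fun N : ℕ => γ ^ N * deriv W (x / B ^ N)) atTop (𝓝 0) := by
        apply squeeze_zero_norm (a := fun N => (K : ℝ) * γ ^ N)
        · intro N
          rw [Real.norm_eq_abs, abs_mul, abs_pow, abs_of_pos hγ0]
          calc γ ^ N * |deriv W (x / B ^ N)| ≤ γ ^ N * K := by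
                apply mul_le_mul_of_nonneg_left _ (by positivity)
                exact norm_deriv_le_of_lipschitz hLip
            _ = (K : ℝ) * γ ^ N := by ring
        · simpa using (tendsto_pow_atTop_nhds_zero_of_lt_one hγ0.le hγ1).const_mul (K : ℝ)
      have hd2 : Tendsto (fun N : ℕ => ∑ i ∈ Finset.range N, γ ^ (i+1) * ψ (x / B ^ (i+1)))
          atTop (𝓝 (∑' i : ℕ, γ ^ (i+1) * ψ (x / B ^ (i+1)))) :=
        (hsummg x).hasSum.tendsto_sum_nat
      have hgx : g x = 0 - ∑' i : ℕ, γ ^ (i+1) * ψ (x / B ^ (i+1)) := by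
        rw [hgdef, zero_sub, ← tsum_neg]
      rw [hgx]
      exact hd1.sub hd2
    have hder : deriv W x = g x := tendsto_nhds_unique hten1 hten2
    have hdiffx : DifferentiableAt ℝ W x := (hiter 0).differentiableAt
    exact hder ▸ hdiffx.hasDerivAt
  -- the primitive V of g
  have hgc : Continuous g := hg.continuous
  set V : ℝ → ℝ := fun x => ∫ t in (0:ℝ)..x, g t with hVdef
  have hV : ∀ x, HasDerivAt V (g x) x := fun x =>
    (hgc.integral_hasStrictDerivAt 0 x).hasDerivAt
  have hVlip : ∀ x y : ℝ, |V x - V y| ≤ Cg * |x - y| := by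
    intro x y
    have hVxy : V x - V y = ∫ t in y..x, g t := by
      rw [hVdef]
      simp only
      rw [← intervalIntegral.integral_interval_sub_left (hgc.intervalIntegrable 0 x)
        (hgc.intervalIntegrable 0 y)]
    rw [hVxy, ← Real.norm_eq_abs, ← Real.norm_eq_abs]
    exact intervalIntegral.norm_integral_le_of_norm_le_const fun t _ => by
      rw [Real.norm_eq_abs]; exact hgb t
  -- W - V is Lipschitz with a.e. zero derivative, hence constant
  set h : ℝ → ℝ := fun x => W x - V x with hhdef
  have hLh : LipschitzWith (K + Real.toNNReal Cg) h := by
    apply LipschitzWith.of_dist_le_mul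
    intro x y
    rw [hhdef]
    simp only [Real.dist_eq]
    have h1 : |W x - W y| ≤ (K : ℝ) * |x - y| := by
      have := hLip.dist_le_mul x y
      rwa [Real.dist_eq, Real.dist_eq] at this
    have h2 := hVlip x y
    calc |W x - V x - (W y - V y)| = |(W x - W y) - (V x - V y)| := by ring_nf
      _ ≤ |W x - W y| + |V x - V y| := abs_sub _ _
      _ ≤ (K : ℝ) * |x - y| + Cg * |x - y| := add_le_add h1 h2
      _ = ((K + Real.toNNReal Cg : NNReal) : ℝ) * |x - y| := by
          rw [NNReal.coe_add, Real.coe_toNNReal _ hCg0]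
          ring
  have hhd : ∀ᵐ x, HasDerivAt h 0 x := by
    filter_upwards [hWg] with x hx
    have := hx.sub (hV x)
    exact this.congr_deriv (sub_self _)
  have hconst : ∀ x, h x = h 0 := const_of_lip_ae_deriv_zero hLh hhd
  -- conclusion
  have hWV : W = fun x => V x + h 0 := by
    funext x
    have := hconst x
    rw [hhdef] at this
    simp only at this
    rw [hhdef]
    simp only
    linarith
  rw [hWV]
  apply ContDiff.add _ contDiff_const
  have hVk : ContDiff ℝ ((m : WithTop ℕ∞) + 1) V := by
    rw [contDiff_succ_iff_deriv]
    refine ⟨fun x => (hV x).differentiableAt, ?_, ?_⟩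
    · intro habs
      simp at habs
    · have hderivV : deriv V = g := funext fun x => (hV x).deriv
      rw [hderivV]
      exact hg
  rw [hm]
  exact_mod_cast hVk
end

section
/- Let W : ℝ → ℝ be α-Hölder continuous with constant K (for some α ∈ (0,1)) and suppose there exist constants c > 0, κ > 0 such that for every δ ∈ (0,1) and every x ∈ ℝ there exists y with cδ < y − x < δ and |W(y) − W(x)| ≥ κ(y−x)^α. Then there exist t₀ > 0 and C₀ > 0 such that: whenever t ≠ 0 and the function f(x) = W(x+t) − W(x) is C² with sup_x |f''(x)| = E < ∞, either |t| > t₀ or E·|t|^{2−α} ≥ C₀. -/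
open Set

private lemma aux_lip (g : ℝ → ℝ) (hg : Differentiable ℝ g) (M : ℝ)
    (hM : ∀ x, |deriv g x| ≤ M) : ∀ x y : ℝ, |g y - g x| ≤ M * |y - x| := by
  intro x y
  have := Convex.norm_image_sub_le_of_norm_deriv_le (s := (univ : Set ℝ))
    (fun z _ => hg.differentiableAt) (fun z _ => hM z) convex_univ (mem_univ x) (mem_univ y)
  simpa [Real.norm_eq_abs] using this

private lemma aux_deriv_bound (g : ℝ → ℝ) (hg : Differentiable ℝ g) (B E u : ℝ)
    (hu : 0 < u) (hB : ∀ x, |g x| ≤ B)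
    (hLip : ∀ x y : ℝ, |deriv g y - deriv g x| ≤ E * |y - x|) :
    ∀ y, |deriv g y| ≤ 2 * B / u + E * u := by
  intro y
  obtain ⟨ξ, hξ, hslope⟩ := exists_hasDerivAt_eq_slope g (deriv g)
    (by linarith : y < y + u) (hg.continuous.continuousOn)
    (fun z _ => hg.differentiableAt.hasDerivAt)
  have hnum : |g (y + u) - g y| ≤ 2 * B := by
    calc |g (y + u) - g y| ≤ |g (y + u)| + |g y| := abs_sub _ _
      _ ≤ 2 * B := by linarith [hB (y + u), hB y]
  have h1 : |deriv g ξ| ≤ 2 * B / u := by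
    rw [hslope, show y + u - y = u from by ring, abs_div, abs_of_pos hu]
    gcongr
  have h2 : |deriv g y - deriv g ξ| ≤ E * u := by
    have hξ1 := hξ.1
    have hξ2 := hξ.2
    have hd : |y - ξ| ≤ u := by
      rw [abs_of_nonpos (by linarith : y - ξ ≤ 0)]
      linarith
    have hE : 0 ≤ E := by
      have := hLip 0 1
      simpa using this.trans' (abs_nonneg _) |>.trans_eq (by simp)
    calc |deriv g y - deriv g ξ| ≤ E * |y - ξ| := hLip ξ y
      _ ≤ E * u := by exact mul_le_mul_of_nonneg_left hd hE
  calc |deriv g y| ≤ |deriv g y - deriv g ξ| + |deriv g ξ| := by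
        simpa using abs_add_le (deriv g y - deriv g ξ) (deriv g ξ)
    _ ≤ E * u + 2 * B / u := by linarith
    _ = 2 * B / u + E * u := by ring

private lemma aux_tele (W : ℝ → ℝ) (t M : ℝ) (hM : 0 ≤ M)
    (hfLip : ∀ x y : ℝ, |(W (y + t) - W y) - (W (x + t) - W x)| ≤ M * |y - x|) :
    ∀ (x : ℝ) (n : ℕ), |W (x + n * t) - W x - n * (W (x + t) - W x)| ≤ M * n ^ 2 * |t| := by
  intro x n
  induction n with
  | zero => simp
  | succ n ih =>
    have h2 : |(W ((x + n * t) + t) - W (x + n * t)) - (W (x + t) - W x)|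
        ≤ M * ((n : ℝ) * |t|) := by
      have := hfLip x (x + n * t)
      simpa [show x + (n:ℝ) * t - x = (n:ℝ) * t from by ring, abs_mul,
        Nat.abs_cast] using this
    have key : W (x + ((n:ℕ)+1 : ℕ) * t) - W x - (((n:ℕ)+1 : ℕ) : ℝ) * (W (x + t) - W x)
        = (W (x + (n:ℝ) * t) - W x - (n:ℝ) * (W (x + t) - W x))
          + ((W ((x + (n:ℝ) * t) + t) - W (x + (n:ℝ) * t)) - (W (x + t) - W x)) := by
      have e1 : x + (((n:ℕ)+1 : ℕ) : ℝ) * t = (x + (n:ℝ) * t) + t := by push_cast; ring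
      rw [e1]; push_cast; ring
    rw [key]
    calc |_ + _| ≤ |W (x + (n:ℝ) * t) - W x - (n:ℝ) * (W (x + t) - W x)|
          + |(W ((x + (n:ℝ) * t) + t) - W (x + (n:ℝ) * t)) - (W (x + t) - W x)| := abs_add_le _ _
      _ ≤ M * (n:ℝ)^2 * |t| + M * ((n:ℝ) * |t|) := add_le_add ih h2
      _ ≤ M * (((n:ℕ)+1 : ℕ) : ℝ)^2 * |t| := by
          push_cast
          nlinarith [abs_nonneg t, mul_nonneg hM (abs_nonneg t), Nat.cast_nonneg (α := ℝ) n]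

set_option maxHeartbeats 2000000 in
/-- Key Estimate: lower bound for the size of a C²-regulating period of an
α-Hölder, anti-Hölder function `W`. -/
theorem stmt_4 (W : ℝ → ℝ) (α K c κ : ℝ) (hα : α ∈ Set.Ioo (0:ℝ) 1)
    (hK : 0 < K) (hc : 0 < c) (hκ : 0 < κ)
    (hHolder : ∀ x y : ℝ, |W x - W y| ≤ K * |x - y| ^ α)
    (hAnti : ∀ δ ∈ Set.Ioo (0:ℝ) 1, ∀ x : ℝ, ∃ y : ℝ,
      c * δ < y - x ∧ y - x < δ ∧ κ * (y - x) ^ α ≤ |W y - W x|) :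
    ∃ t₀ > (0:ℝ), ∃ C₀ > (0:ℝ), ∀ t : ℝ, t ≠ 0 → ∀ E : ℝ,
      ContDiff ℝ 2 (fun x => W (x + t) - W x) →
      (∀ x, |iteratedDeriv 2 (fun x => W (x + t) - W x) x| ≤ E) →
      t₀ < |t| ∨ C₀ ≤ E * |t| ^ (2 - α) := by
  obtain ⟨hα0, hα1⟩ := hα
  have hcα : (0:ℝ) < c ^ α := Real.rpow_pos_of_pos hc α
  set ρ : ℝ := κ * c ^ α / (4 * K) with hρdef
  have hρ : 0 < ρ := by positivity
  set Λ : ℕ := max 1 ⌈(1/ρ) ^ (1/(1-α))⌉₊ with hΛdef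
  have hΛpos : (0:ℝ) < (Λ:ℝ) := by
    have : 1 ≤ Λ := le_max_left _ _
    exact_mod_cast Nat.lt_of_lt_of_le Nat.zero_lt_one this
  have h1α : (0:ℝ) < 1 - α := by linarith
  have hΛge : ((1/ρ) ^ (1/(1-α)) : ℝ) ≤ (Λ:ℝ) :=
    (Nat.le_ceil _).trans (Nat.cast_le.mpr (le_max_right _ _))
  have hρK : κ * c ^ α / 4 * (1/ρ) = K := by rw [hρdef]; field_simp
  have hP1 : K * (Λ:ℝ) ^ α ≤ κ * c ^ α / 4 * (Λ:ℝ) := by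
    have h1 : (1/ρ : ℝ) ≤ (Λ:ℝ) ^ (1-α) := by
      calc (1/ρ : ℝ) = ((1/ρ) ^ (1/(1-α))) ^ (1-α) := by
            rw [← Real.rpow_mul (by positivity)]
            rw [one_div_mul_cancel h1α.ne', Real.rpow_one]
        _ ≤ (Λ:ℝ) ^ (1-α) := Real.rpow_le_rpow (by positivity) hΛge h1α.le
    have h2 : K ≤ κ * c ^ α / 4 * (Λ:ℝ) ^ (1-α) := by
      rw [← hρK]; gcongr
    calc K * (Λ:ℝ) ^ α ≤ (κ * c ^ α / 4 * (Λ:ℝ) ^ (1-α)) * (Λ:ℝ) ^ α := by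
          gcongr
      _ = κ * c ^ α / 4 * (Λ:ℝ) := by
          rw [mul_assoc, ← Real.rpow_add hΛpos]; norm_num
  set A : ℝ := max ((1/ρ) ^ (1/α)) (2/c) with hAdef
  have hA : 0 < A := lt_max_of_lt_right (by positivity)
  have hP2 : K ≤ κ * c ^ α / 4 * A ^ α := by
    have h1 : (1/ρ : ℝ) ≤ A ^ α := by
      calc (1/ρ : ℝ) = ((1/ρ) ^ (1/α)) ^ α := by
            rw [← Real.rpow_mul (by positivity), one_div_mul_cancel hα0.ne', Real.rpow_one]
        _ ≤ A ^ α := Real.rpow_le_rpow (by positivity) (le_max_left _ _) hα0.le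
    rw [← hρK]; gcongr
  have hP3 : 2 ≤ c * A := by
    calc (2:ℝ) = c * (2/c) := by field_simp
      _ ≤ c * A := by gcongr; exact le_max_right _ _
  have hAα : (0:ℝ) < A ^ α := Real.rpow_pos_of_pos hA α
  set G : ℝ := κ * c ^ α * A ^ α / (2 * ((Λ:ℝ) + 1) * A ^ 2) with hGdef
  have hG : 0 < G := by positivity
  refine ⟨1/(2*A), by positivity, G^2/(8*K), by positivity, ?_⟩
  intro t ht E hC hE
  rcases lt_or_ge (1/(2*A)) |t| with hcase | hcase
  · exact Or.inl hcase
  right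
  set h : ℝ := |t| with hhdef
  have hh : 0 < h := abs_pos.mpr ht
  have hhα : (0:ℝ) < h ^ α := Real.rpow_pos_of_pos hh α
  -- the function f
  set f : ℝ → ℝ := fun x => W (x + t) - W x with hfdef
  have hdf : Differentiable ℝ f := hC.differentiable (by norm_num)
  have hC' : ContDiff ℝ 1 (deriv f) := by
    have h2 : ContDiff ℝ (1 + 1 : ℕ) f := by exact_mod_cast hC
    exact (contDiff_succ_iff_deriv.mp h2).2.2
  have hdf' : Differentiable ℝ (deriv f) := hC'.differentiable one_ne_zero
  have hE' : ∀ x, |deriv (deriv f) x| ≤ E := by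
    intro x
    have := hE x
    rwa [show (2:ℕ) = 1 + 1 from rfl, iteratedDeriv_succ, iteratedDeriv_one] at this
  have hE0 : 0 ≤ E := (abs_nonneg _).trans (hE' 0)
  have hLip2 : ∀ x y : ℝ, |deriv f y - deriv f x| ≤ E * |y - x| :=
    aux_lip (deriv f) hdf' E hE'
  have hfB : ∀ x, |f x| ≤ K * h ^ α := by
    intro x
    have := hHolder (x + t) x
    simpa [hfdef, show x + t - x = t from by ring] using this
  set u : ℝ := 4 * K / G * h with hudef
  have hu : 0 < u := by positivity
  set M : ℝ := 2 * (K * h ^ α) / u + E * u with hMdef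
  have hf'B : ∀ y, |deriv f y| ≤ M := aux_deriv_bound f hdf (K * h ^ α) E u hu hfB hLip2
  have hM0 : (0:ℝ) ≤ M := (abs_nonneg _).trans (hf'B 0)
  have hfLip : ∀ x y : ℝ, |f y - f x| ≤ M * |y - x| := aux_lip f hdf M hf'B
  have tele : ∀ (x : ℝ) (n : ℕ), |W (x + n * t) - W x - n * f x| ≤ M * n ^ 2 * h :=
    fun x n => aux_tele W t M hM0 (fun a b => hfLip a b) x n
  -- generic consequence: n * |f x| ≤ K * (n*h)^α + M * n^2 * h
  have base : ∀ (x : ℝ) (n : ℕ), (n:ℝ) * |f x| ≤ K * ((n:ℝ) * h) ^ α + M * (n:ℝ) ^ 2 * h := by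
    intro x n
    have hH : |W (x + n * t) - W x| ≤ K * ((n:ℝ) * h) ^ α := by
      have := hHolder (x + n * t) x
      simpa [show x + (n:ℝ) * t - x = (n:ℝ) * t from by ring, abs_mul, Nat.abs_cast,
        hhdef] using this
    have h1 : (n:ℝ) * |f x| = |(n:ℝ) * f x| := by
      rw [abs_mul, Nat.abs_cast]
    rw [h1]
    calc |(n:ℝ) * f x| ≤ |W (x + n * t) - W x - n * f x| + |W (x + n * t) - W x| := by
          have := abs_sub (W (x + n * t) - W x - n * f x) (W (x + n * t) - W x)
          rw [show W (x + n * t) - W x - n * f x - (W (x + n * t) - W x) = -((n:ℝ) * f x)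
            from by ring, abs_neg] at this
          linarith only [this]
      _ ≤ M * (n:ℝ) ^ 2 * h + K * ((n:ℝ) * h) ^ α := add_le_add (tele x n) hH
      _ = K * ((n:ℝ) * h) ^ α + M * (n:ℝ) ^ 2 * h := by ring
  -- sharpened bound via m = Λ * n
  have sharp : ∀ (x : ℝ) (n : ℕ), (n:ℝ) * |f x| ≤
      κ * c ^ α / 4 * ((n:ℝ) * h) ^ α + M * (Λ:ℝ) * (n:ℝ) ^ 2 * h := by
    intro x n
    have hb := base x (Λ * n)
    have hcast : ((Λ * n : ℕ) : ℝ) = (Λ:ℝ) * (n:ℝ) := by push_cast; ring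
    rw [hcast] at hb
    have hrw : K * ((Λ:ℝ) * (n:ℝ) * h) ^ α = K * (Λ:ℝ) ^ α * ((n:ℝ) * h) ^ α := by
      rw [show (Λ:ℝ) * (n:ℝ) * h = (Λ:ℝ) * ((n:ℝ) * h) from by ring,
        Real.mul_rpow hΛpos.le (by positivity)]
      ring
    rw [hrw] at hb
    have hb2 : (Λ:ℝ) * ((n:ℝ) * |f x|) ≤
        (Λ:ℝ) * (κ * c ^ α / 4 * ((n:ℝ) * h) ^ α + M * (Λ:ℝ) * (n:ℝ) ^ 2 * h) := by
      have hnh : (0:ℝ) ≤ ((n:ℝ) * h) ^ α := by positivity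
      have hmul := mul_le_mul_of_nonneg_right hP1 hnh
      calc (Λ:ℝ) * ((n:ℝ) * |f x|) = (Λ:ℝ) * (n:ℝ) * |f x| := by ring
        _ ≤ K * (Λ:ℝ) ^ α * (((n:ℝ) * h)) ^ α + M * ((Λ:ℝ) * (n:ℝ)) ^ 2 * h := hb
        _ ≤ κ * c ^ α / 4 * (Λ:ℝ) * (((n:ℝ) * h)) ^ α + M * ((Λ:ℝ) * (n:ℝ)) ^ 2 * h := by
            exact add_le_add hmul le_rfl
        _ = (Λ:ℝ) * (κ * c ^ α / 4 * ((n:ℝ) * h) ^ α + M * (Λ:ℝ) * (n:ℝ) ^ 2 * h) := by ring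
    exact le_of_mul_le_mul_left hb2 hΛpos
  -- apply anti-Hölder at scale δ = A * h
  set δ : ℝ := A * h with hδdef
  have hδ0 : 0 < δ := by positivity
  have hδ1 : δ < 1 := by
    have : δ ≤ A * (1/(2*A)) := by rw [hδdef]; gcongr
    have h2' : A * (1/(2*A)) = 1/2 := by field_simp
    linarith only [this, h2']
  obtain ⟨q, hq1, hq2, hq3⟩ := hAnti δ ⟨hδ0, hδ1⟩ 0
  rw [sub_zero] at hq1 hq2 hq3
  have hq0 : 0 < q := lt_trans (by positivity) hq1
  -- the integer n
  set n : ℕ := ⌊q / h⌋₊ with hndef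
  have hn_le : (n:ℝ) ≤ q / h := Nat.floor_le (by positivity)
  have hn_gt : q / h < (n:ℝ) + 1 := Nat.lt_floor_add_one _
  have hnh_le : (n:ℝ) * h ≤ q := by
    rw [← le_div_iff₀ hh]; exact hn_le
  have hq_nh : q - (n:ℝ) * h < h := by
    have h2' := (div_lt_iff₀ hh).mp hn_gt
    linarith only [h2']
  have hnh_nonneg : (0:ℝ) ≤ q - (n:ℝ) * h := by linarith only [hnh_le]
  have hn_lt_A : (n:ℝ) < A := by
    have : q / h < A := by
      rw [div_lt_iff₀ hh]
      calc q < δ := hq2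
        _ = A * h := hδdef
    linarith only [this, hn_le]
  -- key1 : reduce |W q - W 0| to an increment along steps of t
  have key1 : ∃ z : ℝ, |W q - W 0| ≤ |W (z + (n:ℕ) * t) - W z| + K * h ^ α := by
    have hrem : K * |q - (n:ℝ) * h| ^ α ≤ K * h ^ α := by
      rw [abs_of_nonneg hnh_nonneg]
      gcongr
    rcases ht.lt_or_gt with htneg | htpos
    · refine ⟨q, ?_⟩
      have et : t = -h := by rw [hhdef, abs_of_neg htneg]; ring
      have e : q + (n:ℝ) * t = q - (n:ℝ) * h := by rw [et]; ring
      have hH := hHolder (q - (n:ℝ) * h) 0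
      rw [sub_zero] at hH
      calc |W q - W 0| ≤ |W q - W (q - (n:ℝ) * h)| + |W (q - (n:ℝ) * h) - W 0| := by
            have := abs_sub_abs_le_abs_sub (W q - W 0) (W q - W (q - (n:ℝ) * h))
            have t1 := abs_add_le (W q - W (q - (n:ℝ) * h)) (W (q - (n:ℝ) * h) - W 0)
            calc |W q - W 0| = |(W q - W (q - (n:ℝ)*h)) + (W (q - (n:ℝ)*h) - W 0)| := by
                  ring_nf
              _ ≤ _ := t1
        _ ≤ |W (q + (n:ℕ) * t) - W q| + K * h ^ α := by
            rw [e, abs_sub_comm (W q)]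
            gcongr
            calc |W (q - (n:ℝ) * h) - W 0| ≤ K * |q - (n:ℝ) * h - 0| ^ α := hHolder _ _
              _ = K * |q - (n:ℝ) * h| ^ α := by rw [sub_zero]
              _ ≤ K * h ^ α := hrem
    · refine ⟨0, ?_⟩
      have et : t = h := by rw [hhdef, abs_of_pos htpos]
      have e : (0:ℝ) + (n:ℝ) * t = (n:ℝ) * h := by rw [et]; ring
      calc |W q - W 0| = |(W q - W ((n:ℝ)*h)) + (W ((n:ℝ)*h) - W 0)| := by ring_nf
        _ ≤ |W q - W ((n:ℝ)*h)| + |W ((n:ℝ)*h) - W 0| := abs_add_le _ _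
        _ ≤ K * h ^ α + |W ((0:ℝ) + (n:ℕ) * t) - W 0| := by
            rw [e]
            gcongr
            calc |W q - W ((n:ℝ) * h)| ≤ K * |q - (n:ℝ) * h| ^ α := hHolder _ _
              _ ≤ K * h ^ α := hrem
        _ = |W ((0:ℝ) + (n:ℕ) * t) - W 0| + K * h ^ α := by ring
  obtain ⟨z, hz⟩ := key1
  -- assemble the main chain
  have hδα : δ ^ α = A ^ α * h ^ α := Real.mul_rpow hA.le hh.le
  have hnhδ : ((n:ℝ) * h) ^ α ≤ δ ^ α :=
    Real.rpow_le_rpow (by positivity) (hnh_le.trans hq2.le) hα0.le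
  have hKh : K * h ^ α ≤ κ * c ^ α / 4 * δ ^ α := by
    rw [hδα]
    calc K * h ^ α ≤ (κ * c ^ α / 4 * A ^ α) * h ^ α := by gcongr
      _ = κ * c ^ α / 4 * (A ^ α * h ^ α) := by ring
  have hWz : |W (z + (n:ℕ) * t) - W z| ≤ (n:ℝ) * |f z| + M * (n:ℝ) ^ 2 * h := by
    have ht' := tele z n
    calc |W (z + (n:ℕ) * t) - W z|
        = |(W (z + (n:ℕ) * t) - W z - (n:ℝ) * f z) + (n:ℝ) * f z| := by ring_nf
      _ ≤ |W (z + (n:ℕ) * t) - W z - (n:ℝ) * f z| + |(n:ℝ) * f z| := abs_add_le _ _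
      _ ≤ M * (n:ℝ) ^ 2 * h + (n:ℝ) * |f z| := by
          rw [abs_mul, Nat.abs_cast]
          exact add_le_add ht' le_rfl
      _ = (n:ℝ) * |f z| + M * (n:ℝ) ^ 2 * h := by ring
  have hlhs : κ * c ^ α * δ ^ α ≤ |W q - W 0| := by
    calc κ * c ^ α * δ ^ α = κ * (c * δ) ^ α := by
          rw [Real.mul_rpow hc.le hδ0.le]; ring
      _ ≤ κ * q ^ α := by
          gcongr
      _ ≤ |W q - W 0| := hq3
  have hnA2 : (n:ℝ) ^ 2 ≤ A ^ 2 := by nlinarith only [Nat.cast_nonneg (α := ℝ) n, hn_lt_A]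
  have hchain : κ * c ^ α * δ ^ α ≤ κ * c ^ α / 2 * δ ^ α + M * ((Λ:ℝ) + 1) * A ^ 2 * h := by
    have s1 := sharp z n
    have s2 : κ * c ^ α / 4 * ((n:ℝ) * h) ^ α ≤ κ * c ^ α / 4 * δ ^ α := by gcongr
    have s3 : M * (Λ:ℝ) * (n:ℝ) ^ 2 * h ≤ M * (Λ:ℝ) * A ^ 2 * h := by
      have h34 : (0:ℝ) ≤ M * (Λ:ℝ) * h := by positivity
      calc M * (Λ:ℝ) * (n:ℝ) ^ 2 * h = (M * (Λ:ℝ) * h) * (n:ℝ) ^ 2 := by ring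
        _ ≤ (M * (Λ:ℝ) * h) * A ^ 2 := mul_le_mul_of_nonneg_left hnA2 h34
        _ = M * (Λ:ℝ) * A ^ 2 * h := by ring
    have s4 : M * (n:ℝ) ^ 2 * h ≤ M * A ^ 2 * h := by
      have h34 : (0:ℝ) ≤ M * h := by positivity
      calc M * (n:ℝ) ^ 2 * h = (M * h) * (n:ℝ) ^ 2 := by ring
        _ ≤ (M * h) * A ^ 2 := mul_le_mul_of_nonneg_left hnA2 h34
        _ = M * A ^ 2 * h := by ring
    calc κ * c ^ α * δ ^ α ≤ |W q - W 0| := hlhs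
      _ ≤ |W (z + (n:ℕ) * t) - W z| + K * h ^ α := hz
      _ ≤ ((n:ℝ) * |f z| + M * (n:ℝ) ^ 2 * h) + κ * c ^ α / 4 * δ ^ α :=
          add_le_add hWz hKh
      _ ≤ ((κ * c ^ α / 4 * δ ^ α + M * (Λ:ℝ) * A ^ 2 * h) + M * A ^ 2 * h)
            + κ * c ^ α / 4 * δ ^ α := by
          gcongr ?_ + _
          exact add_le_add (s1.trans (add_le_add s2 s3)) s4
      _ = κ * c ^ α / 2 * δ ^ α + M * ((Λ:ℝ) + 1) * A ^ 2 * h := by ring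
  -- conclude G * h^α ≤ M * h
  have hGh : G * h ^ α ≤ M * h := by
    have e1 : κ * c ^ α / 2 * δ ^ α ≤ M * ((Λ:ℝ) + 1) * A ^ 2 * h := by linarith only [hchain]
    have e2 : G * (2 * ((Λ:ℝ) + 1) * A ^ 2) = κ * c ^ α * A ^ α := by
      rw [hGdef]; field_simp
    have e3 : κ * c ^ α / 2 * δ ^ α = G * (((Λ:ℝ) + 1) * A ^ 2) * h ^ α := by
      rw [hδα]
      linear_combination (-(h ^ α) / 2) * e2
    rw [e3] at e1
    have hpos : (0:ℝ) < ((Λ:ℝ) + 1) * A ^ 2 := by positivity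
    have e4 : (((Λ:ℝ) + 1) * A ^ 2) * (G * h ^ α) ≤ (((Λ:ℝ) + 1) * A ^ 2) * (M * h) := by
      nlinarith only [e1]
    exact le_of_mul_le_mul_left e4 hpos
  -- unfold M and u, conclude lower bound on E
  have hMh : M * h = G / 2 * h ^ α + E * (4 * K / G) * h ^ 2 := by
    rw [hMdef, hudef]
    field_simp
    ring
  have hElow : G / 2 * h ^ α ≤ E * (4 * K / G) * h ^ 2 := by
    rw [hMh] at hGh
    linarith only [hGh]
  -- final rpow bookkeeping
  have hpow : h ^ α * h ^ (2 - α) = h ^ 2 := by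
    rw [← Real.rpow_natCast h 2, ← Real.rpow_add hh]
    norm_num
  have hGne : G ≠ 0 := ne_of_gt hG
  have hKne : K ≠ 0 := ne_of_gt hK
  have hp2α : (0:ℝ) < h ^ (2 - α) := Real.rpow_pos_of_pos hh _
  have step1 : (G / 2) * h ^ 2 ≤ (4 * K / G) * (E * h ^ (2 - α)) * h ^ 2 := by
    have hm := mul_le_mul_of_nonneg_right hElow hp2α.le
    calc (G / 2) * h ^ 2 = G / 2 * h ^ α * h ^ (2 - α) := by rw [mul_assoc, hpow]
      _ ≤ E * (4 * K / G) * h ^ 2 * h ^ (2 - α) := hm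
      _ = (4 * K / G) * (E * h ^ (2 - α)) * h ^ 2 := by ring
  have step2 : G / 2 ≤ (4 * K / G) * (E * h ^ (2 - α)) := by
    have h2 : (0:ℝ) < h ^ 2 := by positivity
    exact le_of_mul_le_mul_right step1 h2
  have hm2 := mul_le_mul_of_nonneg_right step2
    (le_of_lt (by positivity : (0:ℝ) < G / (4 * K)))
  calc G ^ 2 / (8 * K) = (G / 2) * (G / (4 * K)) := by field_simp; ring
    _ ≤ ((4 * K / G) * (E * h ^ (2 - α))) * (G / (4 * K)) := hm2
    _ = E * h ^ (2 - α) := by field_simp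
end

section
/- Call a C^k function f : [a,b) → ℝ k-regular if sup_{x∈[a,b)} |f^{(k)}(x)| ≤ 2·inf_{x∈[a,b)} |f^{(k)}(x)|. For every integer k ≥ 1 there exist δ_k > 0 and ρ_k > 0 such that: if f : [a,b) → ℝ is k-regular for some k ≥ 1, then there exists an interval J ⊆ [a,b) with |J| > δ_k(b−a) and inf_{x∈J} |f'(x)| ≥ ρ_k · sup_{x∈[a,b)} |f'(x)|. -/
open Set

private lemma descent_pos {u v μ : ℝ} (huv : u < v) (hμ : 0 < μ) {φ ψ : ℝ → ℝ}
    (hφ : ∀ x ∈ Ico u v, HasDerivWithinAt φ (ψ x) (Ico u v) x)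
    (hb : ∀ x ∈ Ico u v, μ ≤ ψ x) :
    ∃ u' v', Ico u' v' ⊆ Ico u v ∧ v' - u' = (v - u) / 4 ∧
      ∀ x ∈ Ico u' v', μ * (v - u) / 4 ≤ |φ x| := by
  have hcont : ContinuousOn φ (Ico u v) := fun x hx => (hφ x hx).continuousWithinAt
  have key : ∀ p q, p ∈ Ico u v → q ∈ Ico u v → p < q → μ * (q - p) ≤ φ q - φ p := by
    intro p q hp hq hpq
    obtain ⟨c, hc, hceq⟩ := exists_hasDerivAt_eq_slope φ ψ hpq
      (hcont.mono (fun x hx => ⟨le_trans hp.1 hx.1, lt_of_le_of_lt hx.2 hq.2⟩))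
      (fun c hc => (hφ c ⟨le_trans hp.1 hc.1.le, hc.2.trans hq.2⟩).hasDerivAt
        (Ico_mem_nhds (lt_of_le_of_lt hp.1 hc.1) (hc.2.trans hq.2)))
    have h1 := hb c ⟨le_trans hp.1 hc.1.le, hc.2.trans hq.2⟩
    rw [hceq, le_div_iff₀ (by linarith)] at h1
    linarith
  set m := (u + v) / 2 with hm
  have hmmem : m ∈ Ico u v := ⟨by rw [hm]; linarith, by rw [hm]; linarith⟩
  by_cases hsign : 0 ≤ φ m
  · refine ⟨u + 3 * (v - u) / 4, v, Ico_subset_Ico (by linarith) le_rfl, by ring, ?_⟩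
    intro x hx
    have hx' : x ∈ Ico u v := ⟨by linarith [hx.1], hx.2⟩
    have hmx : m < x := by rw [hm]; linarith [hx.1]
    have h1 := key m x hmmem hx' hmx
    have h2 : μ * (v - u) / 4 ≤ μ * (x - m) := by
      have : (v - u) / 4 ≤ x - m := by rw [hm]; linarith [hx.1]
      nlinarith
    have h3 : μ * (v - u) / 4 ≤ φ x := by linarith
    exact h3.trans (le_abs_self _)
  · refine ⟨u, u + (v - u) / 4, Ico_subset_Ico le_rfl (by linarith), by ring, ?_⟩
    intro x hx
    have hx' : x ∈ Ico u v := ⟨hx.1, by linarith [hx.2]⟩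
    have hxm : x < m := by rw [hm]; linarith [hx.2]
    have h1 := key x m hx' hmmem hxm
    have h2 : μ * (v - u) / 4 ≤ μ * (m - x) := by
      have : (v - u) / 4 ≤ m - x := by rw [hm]; linarith [hx.2]
      nlinarith
    have h3 : μ * (v - u) / 4 ≤ -φ x := by linarith
    exact h3.trans (neg_le_abs _)

private lemma descent {u v μ : ℝ} (huv : u < v) (hμ : 0 < μ) {φ ψ : ℝ → ℝ}
    (hφ : ∀ x ∈ Ico u v, HasDerivWithinAt φ (ψ x) (Ico u v) x)
    (hψ : ContinuousOn ψ (Ico u v))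
    (hb : ∀ x ∈ Ico u v, μ ≤ |ψ x|) :
    ∃ u' v', Ico u' v' ⊆ Ico u v ∧ v' - u' = (v - u) / 4 ∧
      ∀ x ∈ Ico u' v', μ * (v - u) / 4 ≤ |φ x| := by
  have hu : u ∈ Ico u v := ⟨le_rfl, huv⟩
  have nozero : ∀ x ∈ Ico u v, ψ x ≠ 0 := fun x hx h0 => by
    have := hb x hx; rw [h0, abs_zero] at this; linarith
  rcases le_abs.mp (hb u hu) with hpos | hneg
  · have hball : ∀ x ∈ Ico u v, μ ≤ ψ x := by
      intro x hx
      rcases le_abs.mp (hb x hx) with h | h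
      · exact h
      · exfalso
        have hux : u < x := lt_of_le_of_ne hx.1 (by rintro rfl; linarith)
        obtain ⟨c, hc, hc0⟩ := intermediate_value_Icc' hux.le
          (hψ.mono (fun z hz => ⟨hz.1, lt_of_le_of_lt hz.2 hx.2⟩))
          (⟨by linarith, by linarith⟩ : (0:ℝ) ∈ Icc (ψ x) (ψ u))
        exact nozero c ⟨hc.1, lt_of_le_of_lt hc.2 hx.2⟩ hc0
    exact descent_pos huv hμ hφ hball
  · have hball : ∀ x ∈ Ico u v, μ ≤ -ψ x := by
      intro x hx
      rcases le_abs.mp (hb x hx) with h | h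
      · exfalso
        have hux : u < x := lt_of_le_of_ne hx.1 (by rintro rfl; linarith)
        obtain ⟨c, hc, hc0⟩ := intermediate_value_Icc hux.le
          (hψ.mono (fun z hz => ⟨hz.1, lt_of_le_of_lt hz.2 hx.2⟩))
          (⟨by linarith, by linarith⟩ : (0:ℝ) ∈ Icc (ψ u) (ψ x))
        exact nozero c ⟨hc.1, lt_of_le_of_lt hc.2 hx.2⟩ hc0
      · exact h
    obtain ⟨u', v', h1, h2, h3⟩ := descent_pos huv hμ
      (φ := fun y => -φ y) (ψ := fun y => -ψ y)
      (fun x hx => (hφ x hx).neg) hball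
    exact ⟨u', v', h1, h2, fun x hx => by simpa [abs_neg] using h3 x hx⟩


private lemma pow_ineq (k : ℕ) (hk : 2 ≤ k) :
    ((1:ℝ)/4)^(k*k) * (2 * 2^(k-1)) * 4^((k-1)*(k-1)) ≤ 1/2 := by
  have keyN : k + 2*((k-1)*(k-1)) + 1 ≤ 2*(k*k) := by
    obtain ⟨m, rfl⟩ := Nat.exists_eq_add_of_le hk
    have h1 : 2 + m - 1 = m + 1 := by omega
    rw [h1]; nlinarith
  have key : (2:ℝ)^(k + 2*((k-1)*(k-1)) + 1) ≤ (2:ℝ)^(2*(k*k)) :=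
    pow_le_pow_right₀ one_le_two keyN
  have e0 : ∀ n : ℕ, (4:ℝ)^n = 2^(2*n) := fun n => by
    rw [pow_mul]; norm_num
  have e1 : ((1:ℝ)/4)^(k*k) = ((2:ℝ)^(2*(k*k)))⁻¹ := by
    rw [div_pow, one_pow, one_div, e0]
  have e3 : (2:ℝ) * 2^(k-1) = 2^k := by
    rw [← pow_succ']
    congr 1
    omega
  rw [e1, e0, e3, mul_assoc, ← pow_add]
  rw [inv_mul_le_iff₀ (by positivity)]
  rw [pow_succ] at key
  nlinarith [key]


private lemma main_lemma : ∀ k : ℕ, 1 ≤ k → ∀ a b : ℝ, a < b → ∀ f : ℝ → ℝ,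
    ContDiffOn ℝ k f (Set.Ico a b) →
    (∀ x ∈ Set.Ico a b, ∀ y ∈ Set.Ico a b,
      |iteratedDerivWithin k f (Set.Ico a b) x| ≤
        2 * |iteratedDerivWithin k f (Set.Ico a b) y|) →
    ∃ u v : ℝ, Set.Ico u v ⊆ Set.Ico a b ∧ ((1:ℝ)/4)^k * (b - a) < v - u ∧
      ∀ x ∈ Set.Ico u v, ∀ y ∈ Set.Ico a b,
        ((1:ℝ)/4)^(k*k) * |derivWithin f (Set.Ico a b) y| ≤
          |derivWithin f (Set.Ico a b) x| := by
  intro k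
  induction k using Nat.strong_induction_on with
  | _ k IH =>
  intro hk a b hab f hf hreg
  have hsu : UniqueDiffOn ℝ (Ico a b) := uniqueDiffOn_Ico a b
  have hconv : Convex ℝ (Ico a b) := convex_Ico a b
  have ha : a ∈ Ico a b := ⟨le_rfl, hab⟩
  have hasD : ∀ j, j < k → ∀ x ∈ Ico a b,
      HasDerivWithinAt (iteratedDerivWithin j f (Ico a b))
        (iteratedDerivWithin (j+1) f (Ico a b) x) (Ico a b) x := by
    intro j hj x hx
    have hdiff := hf.differentiableOn_iteratedDerivWithin (m := j)
      (by exact_mod_cast hj) hsu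
    have h1 := (hdiff x hx).hasDerivWithinAt
    rwa [← iteratedDerivWithin_succ] at h1
  have hcont : ∀ j, j ≤ k → ContinuousOn (iteratedDerivWithin j f (Ico a b)) (Ico a b) :=
    fun j hj => hf.continuousOn_iteratedDerivWithin (by exact_mod_cast hj) hsu
  by_cases hA : ∃ k', 1 ≤ k' ∧ k' < k ∧ ∀ x ∈ Ico a b, ∀ y ∈ Ico a b,
      |iteratedDerivWithin k' f (Ico a b) x| ≤ 2 * |iteratedDerivWithin k' f (Ico a b) y|
  · obtain ⟨k', hk1, hkk, hreg'⟩ := hA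
    obtain ⟨u, v, hsub, hlen, hbound⟩ := IH k' hkk hk1 a b hab f
      (hf.of_le (by exact_mod_cast hkk.le)) hreg'
    refine ⟨u, v, hsub, lt_of_le_of_lt ?_ hlen, fun x hx y hy =>
      le_trans ?_ (hbound x hx y hy)⟩
    · exact mul_le_mul_of_nonneg_right
        (pow_le_pow_of_le_one (by norm_num) (by norm_num) hkk.le) (by linarith)
    · exact mul_le_mul_of_nonneg_right
        (pow_le_pow_of_le_one (by norm_num) (by norm_num)
          (Nat.mul_le_mul hkk.le hkk.le)) (abs_nonneg _)
  · push_neg at hA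
    by_cases hk1 : k = 1
    · subst hk1
      refine ⟨a, b, subset_rfl, by nlinarith, ?_⟩
      intro x hx y hy
      have h1 := hreg y hy x hx
      rw [iteratedDerivWithin_one] at h1
      have h2 := abs_nonneg (derivWithin f (Ico a b) y)
      norm_num
      linarith
    have hk2' : 2 ≤ k := by omega
    -- the top derivative never vanishes
    have hgka : iteratedDerivWithin k f (Ico a b) a ≠ 0 := by
      intro h0
      have hz : ∀ x ∈ Ico a b, iteratedDerivWithin k f (Ico a b) x = 0 := by
        intro x hx
        have := hreg x hx a ha
        rw [h0, abs_zero, mul_zero] at this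
        exact abs_nonpos_iff.mp this
      obtain ⟨x0, hx0, y0, hy0, hlt⟩ := hA (k-1) (by omega) (by omega)
      have hder : ∀ x ∈ Ico a b, HasDerivWithinAt (iteratedDerivWithin (k-1) f (Ico a b))
          (iteratedDerivWithin k f (Ico a b) x) (Ico a b) x := by
        intro x hx
        have h1 := hasD (k-1) (by omega) x hx
        have h2 : k - 1 + 1 = k := by omega
        rwa [h2] at h1
      have hle := hconv.norm_image_sub_le_of_norm_hasDerivWithin_le (C := 0) hder
        (fun x hx => by simp [hz x hx]) hy0 hx0
      simp only [Real.norm_eq_abs, zero_mul] at hle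
      have heq : iteratedDerivWithin (k-1) f (Ico a b) x0
          = iteratedDerivWithin (k-1) f (Ico a b) y0 := by
        have := abs_nonneg (iteratedDerivWithin (k-1) f (Ico a b) x0
          - iteratedDerivWithin (k-1) f (Ico a b) y0)
        have h3 : |iteratedDerivWithin (k-1) f (Ico a b) x0
          - iteratedDerivWithin (k-1) f (Ico a b) y0| = 0 := le_antisymm hle this
        have := abs_eq_zero.mp h3
        linarith
      rw [heq] at hlt
      have := abs_nonneg (iteratedDerivWithin (k-1) f (Ico a b) y0)
      linarith
    set lam := |iteratedDerivWithin k f (Ico a b) a| with hlamdef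
    have hlam : 0 < lam := abs_pos.mpr hgka
    have lower : ∀ x ∈ Ico a b, lam / 2 ≤ |iteratedDerivWithin k f (Ico a b) x| := by
      intro x hx
      have := hreg a ha x hx
      linarith
    have upper : ∀ x ∈ Ico a b, |iteratedDerivWithin k f (Ico a b) x| ≤ 2 * lam :=
      fun x hx => hreg x hx a ha
        -- descent chain: lower bounds for successive derivatives on shrinking intervals
    have S : ∀ i : ℕ, i ≤ k - 1 → ∃ u v : ℝ, Ico u v ⊆ Ico a b ∧ v - u = (b-a)/4^i ∧
        ∀ x ∈ Ico u v, lam/2 * ((b-a)/4^(k-1))^i ≤ |iteratedDerivWithin (k-i) f (Ico a b) x| := by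
      intro i
      induction i with
      | zero =>
        intro _
        exact ⟨a, b, subset_rfl, by simp, fun x hx => by simpa using lower x hx⟩
      | succ i ih =>
        intro hik
        obtain ⟨u, v, hsub, hlen, hbnd⟩ := ih (by omega)
        have hlp : (0:ℝ) < (b-a)/4^i := div_pos (by linarith) (by positivity)
        have huv : u < v := by linarith
        have hmu : (0:ℝ) < lam/2 * ((b-a)/4^(k-1))^i :=
          mul_pos (by linarith) (pow_pos (div_pos (by linarith) (by positivity)) i)
        have hphi : ∀ x ∈ Ico u v, HasDerivWithinAt (iteratedDerivWithin (k-(i+1)) f (Ico a b))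
            (iteratedDerivWithin (k-i) f (Ico a b) x) (Ico u v) x := by
          intro x hx
          have h1 := hasD (k-(i+1)) (by omega) x (hsub hx)
          have h2 : k - (i+1) + 1 = k - i := by omega
          rw [h2] at h1
          exact h1.mono hsub
        obtain ⟨u', v', hsub', hlen', hbnd'⟩ := descent huv hmu hphi
          ((hcont (k-i) (by omega)).mono hsub) hbnd
        refine ⟨u', v', hsub'.trans hsub, ?_, ?_⟩
        · rw [hlen', hlen, pow_succ]; ring
        · intro x hx
          have h3 := hbnd' x hx
          have h4 : (b-a)/4^(k-1) ≤ (v-u)/4 := by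
            rw [hlen, div_div, ← pow_succ]
            gcongr
            all_goals first | omega | linarith | norm_num
          calc lam/2 * ((b-a)/4^(k-1))^(i+1)
              = (lam/2 * ((b-a)/4^(k-1))^i) * ((b-a)/4^(k-1)) := by ring
            _ ≤ (lam/2 * ((b-a)/4^(k-1))^i) * ((v-u)/4) :=
                mul_le_mul_of_nonneg_left h4 hmu.le
            _ = lam/2 * ((b-a)/4^(k-1))^i * (v-u)/4 := by ring
            _ ≤ _ := h3
    -- upper bound chain
    have T : ∀ i : ℕ, i ≤ k - 1 → ∀ x ∈ Ico a b,
        |iteratedDerivWithin (k-i) f (Ico a b) x| ≤ 2 * lam * (2*(b-a))^i := by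
      intro i
      induction i with
      | zero => intro _ x hx; simpa using upper x hx
      | succ i ih =>
        intro hik x hx
        obtain ⟨x0, hx0, y0, hy0, hlt⟩ := hA (k-(i+1)) (by omega) (by omega)
        have h2 : k - (i+1) + 1 = k - i := by omega
        have hder2 : ∀ z ∈ Ico a b, HasDerivWithinAt (iteratedDerivWithin (k-(i+1)) f (Ico a b))
            (iteratedDerivWithin (k-i) f (Ico a b) z) (Ico a b) z := by
          intro z hz
          have h1 := hasD (k-(i+1)) (by omega) z hz
          rwa [h2] at h1
        have hC : (0:ℝ) ≤ 2*lam*(2*(b-a))^i :=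
          mul_nonneg (by positivity) (pow_nonneg (by linarith) i)
        have hosc : ∀ z w, z ∈ Ico a b → w ∈ Ico a b →
            |iteratedDerivWithin (k-(i+1)) f (Ico a b) z
              - iteratedDerivWithin (k-(i+1)) f (Ico a b) w|
              ≤ (2*lam*(2*(b-a))^i) * (b-a) := by
          intro z w hz hw
          have h5 := hconv.norm_image_sub_le_of_norm_hasDerivWithin_le hder2
            (fun t ht => by simpa using ih (by omega) t ht) hw hz
          simp only [Real.norm_eq_abs] at h5
          have h6 : |z - w| ≤ b - a := by
            rw [abs_sub_le_iff]
            constructor <;> linarith [hz.1, hz.2, hw.1, hw.2]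
          calc |iteratedDerivWithin (k-(i+1)) f (Ico a b) z
              - iteratedDerivWithin (k-(i+1)) f (Ico a b) w|
              ≤ (2*lam*(2*(b-a))^i) * |z - w| := h5
            _ ≤ (2*lam*(2*(b-a))^i) * (b-a) := mul_le_mul_of_nonneg_left h6 hC
        have h7 := hosc x0 y0 hx0 hy0
        have h8 : |iteratedDerivWithin (k-(i+1)) f (Ico a b) y0|
            ≤ (2*lam*(2*(b-a))^i)*(b-a) := by
          have h9 := abs_sub_abs_le_abs_sub (iteratedDerivWithin (k-(i+1)) f (Ico a b) x0)
            (iteratedDerivWithin (k-(i+1)) f (Ico a b) y0)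
          linarith
        have h10 := hosc x y0 hx hy0
        have h11 := abs_sub_abs_le_abs_sub (iteratedDerivWithin (k-(i+1)) f (Ico a b) x)
          (iteratedDerivWithin (k-(i+1)) f (Ico a b) y0)
        have h12 : (2:ℝ)*lam*(2*(b-a))^(i+1) = 2*((2*lam*(2*(b-a))^i)*(b-a)) := by ring
        rw [h12]
        linarith
    -- assemble
    obtain ⟨u, v, hsub, hlen, hbnd⟩ := S (k-1) le_rfl
    have hT := T (k-1) le_rfl
    have h1k : k - (k-1) = 1 := by omega
    rw [h1k] at hbnd hT
    refine ⟨u, v, hsub, ?_, ?_⟩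
    · rw [hlen]
      have e : ((1:ℝ)/4)^k * (b-a) = (b-a)/4^k := by
        rw [div_pow, one_pow]; ring
      rw [e]
      gcongr
      all_goals first | omega | linarith | norm_num
    · intro x hx y hy
      have hx' := hsub hx
      have hlow := hbnd x hx
      have hup := hT y hy
      rw [iteratedDerivWithin_one] at hlow
      rw [iteratedDerivWithin_one] at hup
      have hCpos : (0:ℝ) < (4:ℝ)^((k-1)*(k-1)) := by positivity
      have CI := pow_ineq k hk2'
      have mid : ((1:ℝ)/4)^(k*k) * (2*lam*(2*(b-a))^(k-1))
          ≤ lam/2 * ((b-a)/4^(k-1))^(k-1) := by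
        have e1 : ((b-a)/4^(k-1))^(k-1) = (b-a)^(k-1)/4^((k-1)*(k-1)) := by
          rw [div_pow, ← pow_mul]
        have e2 : (2*(b-a))^(k-1) = 2^(k-1)*(b-a)^(k-1) := mul_pow _ _ _
        rw [e1, e2]
        have e3 : lam/2 * ((b-a)^(k-1)/4^((k-1)*(k-1)))
            = (1/2*(lam*(b-a)^(k-1)))/4^((k-1)*(k-1)) := by ring
        have e4 : ((1:ℝ)/4)^(k*k) * (2*lam*(2^(k-1)*(b-a)^(k-1)))
            = ((1/4)^(k*k)*(2*2^(k-1))*4^((k-1)*(k-1)))*(lam*(b-a)^(k-1))/4^((k-1)*(k-1)) := by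
          field_simp
        rw [e3, e4]
        rw [div_le_div_iff_of_pos_right hCpos]
        exact mul_le_mul_of_nonneg_right CI
          (mul_nonneg hlam.le (pow_nonneg (by linarith) _))
      calc ((1:ℝ)/4)^(k*k) * |derivWithin f (Ico a b) y|
          ≤ ((1:ℝ)/4)^(k*k) * (2*lam*(2*(b-a))^(k-1)) :=
            mul_le_mul_of_nonneg_left hup (by positivity)
        _ ≤ lam/2 * ((b-a)/4^(k-1))^(k-1) := mid
        _ ≤ |derivWithin f (Ico a b) x| := hlow

/-- For a k-regular function `f` on `[a,b)` (i.e. `sup |f⁽ᵏ⁾| ≤ 2 inf |f⁽ᵏ⁾|`),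
there is an interval `J ⊆ [a,b)` with `|J| > δₖ (b-a)` on which
`|f'| ≥ ρₖ · sup_{[a,b)} |f'|`. -/
theorem stmt_9 : ∀ k : ℕ, 1 ≤ k → ∃ δ > (0:ℝ), ∃ ρ > (0:ℝ),
    ∀ a b : ℝ, a < b → ∀ f : ℝ → ℝ, ContDiffOn ℝ k f (Set.Ico a b) →
    (∀ x ∈ Set.Ico a b, ∀ y ∈ Set.Ico a b,
      |iteratedDerivWithin k f (Set.Ico a b) x| ≤
        2 * |iteratedDerivWithin k f (Set.Ico a b) y|) →
    ∃ u v : ℝ, Set.Ico u v ⊆ Set.Ico a b ∧ δ * (b - a) < v - u ∧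
      ∀ x ∈ Set.Ico u v, ∀ y ∈ Set.Ico a b,
        ρ * |derivWithin f (Set.Ico a b) y| ≤ |derivWithin f (Set.Ico a b) x| := by
  intro k hk
  exact ⟨((1:ℝ)/4)^k, by positivity, ((1:ℝ)/4)^(k*k), by positivity, main_lemma k hk⟩
end

section
/- Let (Ω, ℬ, ω) be a probability space, b ≥ 2 an integer, n ∈ ℕ, and f, g : Ω → ℝ measurable with sup_x |f(x) − g(x)| ≤ b^{−n}. Then |H(f_*ω, 𝓛_n) − H(g_*ω, 𝓛_n)| ≤ C for an absolute constant C, where 𝓛_n is the level-n b-adic partition of ℝ and H denotes base-b Shannon entropy. -/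
open Real MeasureTheory Set

namespace Stmt11Aux

lemma gibbs_term {x s : ℝ} (hx : 0 ≤ x) (hs : x ≤ s) :
    x * log s - x * log 3 - x * log x ≤ s / 3 - x := by
  rcases eq_or_lt_of_le hx with h|h
  · simp [← h]
    linarith
  have hs0 : 0 < s := lt_of_lt_of_le h hs
  have hs3 : 0 < s / (3 * x) := div_pos hs0 (by linarith)
  have hle := Real.log_le_sub_one_of_pos hs3
  have hlog : log (s / (3 * x)) = log s - log 3 - log x := by
    rw [log_div (by positivity) (by positivity), log_mul (by norm_num) h.ne']
    ring
  rw [hlog] at hle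
  have := mul_le_mul_of_nonneg_left hle hx
  have hx' : x * (s / (3 * x)) = s / 3 := by field_simp
  nlinarith

lemma three_term {x y z : ℝ} (hx : 0 ≤ x) (hy : 0 ≤ y) (hz : 0 ≤ z) :
    negMulLog x + negMulLog y + negMulLog z ≤ negMulLog (x + y + z) + (x + y + z) * log 3 := by
  set s := x + y + z with hs
  have h1 := gibbs_term hx (by linarith : x ≤ s)
  have h2 := gibbs_term hy (by linarith : y ≤ s)
  have h3 := gibbs_term hz (by linarith : z ≤ s)
  have hexp : x * log s + y * log s + z * log s = s * log s := by rw [hs]; ring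
  have hexp2 : x * log 3 + y * log 3 + z * log 3 = s * log 3 := by rw [hs]; ring
  simp only [negMulLog, neg_mul]
  linarith

lemma subadd {x y : ℝ} (hx : 0 ≤ x) (hy : 0 ≤ y) :
    negMulLog (x + y) ≤ negMulLog x + negMulLog y := by
  rcases eq_or_lt_of_le hx with h|h
  · simp [← h]
  rcases eq_or_lt_of_le hy with h'|h'
  · simp [← h']
  simp only [negMulLog, neg_mul]
  have l1 : x * log x ≤ x * log (x + y) :=
    mul_le_mul_of_nonneg_left (log_le_log h (by linarith)) hx
  have l2 : y * log y ≤ y * log (x + y) :=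
    mul_le_mul_of_nonneg_left (log_le_log h' (by linarith)) hy
  nlinarith [add_mul x y (log (x+y))]

/-- the b-adic cell -/
def cell (b : ℕ) (m : ℤ) (j : ℤ) : Set ℝ :=
  Set.Ico ((j : ℝ) / (b : ℝ) ^ m) (((j : ℝ) + 1) / (b : ℝ) ^ m)

lemma cell_meas (b : ℕ) (m : ℤ) (j : ℤ) : MeasurableSet (cell b m j) :=
  measurableSet_Ico

lemma cell_disjoint {b : ℕ} (hb : 2 ≤ b) (m : ℤ) :
    Pairwise (Function.onFun Disjoint (cell b m)) := by
  have hB : (0:ℝ) < (b:ℝ) ^ m := by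
    apply zpow_pos; exact_mod_cast Nat.lt_of_lt_of_le Nat.zero_lt_two hb
  intro i j hij
  simp only [Function.onFun, cell]
  rw [Set.Ico_disjoint_Ico]
  rcases lt_or_gt_of_ne hij with h|h
  · have : ((i:ℝ) + 1) / (b:ℝ)^m ≤ (j:ℝ) / (b:ℝ)^m := by
      apply div_le_div_of_nonneg_right _ hB.le
      have : (i:ℝ) + 1 ≤ (j:ℝ) := by exact_mod_cast h
      linarith
    calc min (((i:ℝ)+1)/(b:ℝ)^m) (((j:ℝ)+1)/(b:ℝ)^m) ≤ ((i:ℝ)+1)/(b:ℝ)^m := min_le_left _ _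
      _ ≤ (j:ℝ)/(b:ℝ)^m := this
      _ ≤ max ((i:ℝ)/(b:ℝ)^m) ((j:ℝ)/(b:ℝ)^m) := le_max_right _ _
  · have : ((j:ℝ) + 1) / (b:ℝ)^m ≤ (i:ℝ) / (b:ℝ)^m := by
      apply div_le_div_of_nonneg_right _ hB.le
      have : (j:ℝ) + 1 ≤ (i:ℝ) := by exact_mod_cast h
      linarith
    calc min (((i:ℝ)+1)/(b:ℝ)^m) (((j:ℝ)+1)/(b:ℝ)^m) ≤ ((j:ℝ)+1)/(b:ℝ)^m := min_le_right _ _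
      _ ≤ (i:ℝ)/(b:ℝ)^m := this
      _ ≤ max ((i:ℝ)/(b:ℝ)^m) ((j:ℝ)/(b:ℝ)^m) := le_max_left _ _

lemma cell_cover {b : ℕ} (hb : 2 ≤ b) (m : ℤ) : ⋃ j : ℤ, cell b m j = Set.univ := by
  have hB : (0:ℝ) < (b:ℝ) ^ m := by
    apply zpow_pos; exact_mod_cast Nat.lt_of_lt_of_le Nat.zero_lt_two hb
  ext x
  simp only [Set.mem_iUnion, Set.mem_univ, iff_true, cell, Set.mem_Ico]
  refine ⟨⌊x * (b:ℝ)^m⌋, ?_, ?_⟩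
  · rw [div_le_iff₀ hB]; exact Int.floor_le _
  · rw [lt_div_iff₀ hB]; exact Int.lt_floor_add_one _

lemma tsum_cell_eq_one {b : ℕ} (hb : 2 ≤ b) (m : ℤ) (μ : Measure ℝ)
    [IsProbabilityMeasure μ] : ∑' j : ℤ, μ (cell b m j) = 1 := by
  rw [← measure_iUnion (cell_disjoint hb m) (cell_meas b m), cell_cover hb m, measure_univ]


lemma near_cover {b : ℕ} (hb : 2 ≤ b) (n : ℕ) {u v : ℝ}
    (huv : |u - v| ≤ (b:ℝ) ^ (-(n:ℤ))) {j : ℤ} (hu : u ∈ cell b n j) :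
    v ∈ cell b n (j-1) ∨ v ∈ cell b n j ∨ v ∈ cell b n (j+1) := by
  have hB : (0:ℝ) < (b:ℝ) ^ (n:ℤ) := by
    apply zpow_pos; exact_mod_cast Nat.lt_of_lt_of_le Nat.zero_lt_two hb
  set B := (b:ℝ) ^ (n:ℤ) with hBdef
  have hinv : (b:ℝ) ^ (-(n:ℤ)) = 1 / B := by rw [zpow_neg, one_div]
  rw [hinv] at huv
  obtain ⟨h1, h2⟩ := abs_le.mp huv
  simp only [cell, Set.mem_Ico] at hu ⊢
  obtain ⟨hu1, hu2⟩ := hu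
  have e1 : ((j:ℝ)-1)/B = (j:ℝ)/B - 1/B := by ring
  have e2 : ((j:ℝ)+2)/B = ((j:ℝ)+1)/B + 1/B := by ring
  rcases lt_or_ge v ((j:ℝ)/B) with hv1 | hv1
  · left
    push_cast
    constructor
    · rw [e1]; linarith
    · have : ((j:ℝ) - 1 + 1)/B = (j:ℝ)/B := by ring
      rw [this]; exact hv1
  · rcases lt_or_ge v (((j:ℝ)+1)/B) with hv2 | hv2
    · right; left; exact ⟨hv1, hv2⟩
    · right; right
      push_cast
      constructor
      · exact hv2
      · have : ((j:ℝ) + 1 + 1)/B = ((j:ℝ)+2)/B := by ring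
        rw [this, e2]; linarith

lemma decomp {Ω : Type} [MeasurableSpace Ω] (ω : Measure Ω) [IsProbabilityMeasure ω]
    {b : ℕ} {n : ℕ} (hb : 2 ≤ b) {f g : Ω → ℝ} (hf : Measurable f) (hg : Measurable g)
    (hfg : ∀ x, |f x - g x| ≤ (b:ℝ) ^ (-(n:ℤ))) (j : ℤ) :
    ((ω.map f) (cell b n j)).toReal =
      (ω (f ⁻¹' cell b n j ∩ g ⁻¹' cell b n (j-1))).toReal +
      (ω (f ⁻¹' cell b n j ∩ g ⁻¹' cell b n j)).toReal +
      (ω (f ⁻¹' cell b n j ∩ g ⁻¹' cell b n (j+1))).toReal := by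
  rw [Measure.map_apply hf (cell_meas b n j)]
  set X := f ⁻¹' cell b n j ∩ g ⁻¹' cell b n (j-1) with hX
  set Y := f ⁻¹' cell b n j ∩ g ⁻¹' cell b n j with hY
  set Z := f ⁻¹' cell b n j ∩ g ⁻¹' cell b n (j+1) with hZ
  have hXm : MeasurableSet X := (hf (cell_meas b n j)).inter (hg (cell_meas b n (j-1)))
  have hYm : MeasurableSet Y := (hf (cell_meas b n j)).inter (hg (cell_meas b n j))
  have hZm : MeasurableSet Z := (hf (cell_meas b n j)).inter (hg (cell_meas b n (j+1)))
  have hset : f ⁻¹' cell b n j = (X ∪ Y) ∪ Z := by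
    ext x
    simp only [hX, hY, hZ, Set.mem_union, Set.mem_inter_iff, Set.mem_preimage]
    constructor
    · intro hx
      rcases near_cover hb n (hfg x) hx with h | h | h <;> tauto
    · tauto
  have dXY : Disjoint X Y := by
    apply Set.disjoint_of_subset (Set.inter_subset_right) (Set.inter_subset_right)
    exact (cell_disjoint hb n (by omega : (j-1 : ℤ) ≠ j)).preimage g
  have dXZ : Disjoint X Z := by
    apply Set.disjoint_of_subset (Set.inter_subset_right) (Set.inter_subset_right)
    exact (cell_disjoint hb n (by omega : (j-1 : ℤ) ≠ j+1)).preimage g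
  have dYZ : Disjoint Y Z := by
    apply Set.disjoint_of_subset (Set.inter_subset_right) (Set.inter_subset_right)
    exact (cell_disjoint hb n (by omega : (j : ℤ) ≠ j+1)).preimage g
  rw [hset, measure_union (Set.disjoint_union_left.mpr ⟨dXZ, dYZ⟩) hZm,
    measure_union dXY hYm, ENNReal.toReal_add (by finiteness) (by finiteness),
    ENNReal.toReal_add (by finiteness) (by finiteness)]


set_option maxHeartbeats 1000000 in
lemma one_side {b n : ℕ} (hb : 2 ≤ b) {Ω : Type} [MeasurableSpace Ω] (ω : Measure Ω)
    [IsProbabilityMeasure ω] {f g : Ω → ℝ} (hf : Measurable f) (hg : Measurable g)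
    (hfg : ∀ x, |f x - g x| ≤ (b:ℝ) ^ (-(n:ℤ)))
    (hq : Summable (fun k : ℤ => negMulLog ((ω.map g) (cell b n k)).toReal)) :
    Summable (fun j : ℤ => negMulLog ((ω.map f) (cell b n j)).toReal) ∧
      ∑' j : ℤ, negMulLog ((ω.map f) (cell b n j)).toReal ≤
        (∑' k : ℤ, negMulLog ((ω.map g) (cell b n k)).toReal) + log 3 := by
  haveI : IsProbabilityMeasure (ω.map g) := Measure.isProbabilityMeasure_map hg.aemeasurable
  set A : ℤ → ℤ → ℝ := fun j k => (ω (f ⁻¹' cell b n j ∩ g ⁻¹' cell b n k)).toReal with hAdef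
  have hA0 : ∀ j k, 0 ≤ A j k := fun _ _ => ENNReal.toReal_nonneg
  have hA1 : ∀ j k, A j k ≤ 1 := by
    intro j k
    simpa using ENNReal.toReal_mono (by norm_num) (prob_le_one (μ := ω) (s := _))
  set p : ℤ → ℝ := fun j => ((ω.map f) (cell b n j)).toReal with hpdef
  set q : ℤ → ℝ := fun k => ((ω.map g) (cell b n k)).toReal with hqdef
  have hp_eq : ∀ j, p j = A j (j-1) + A j j + A j (j+1) := fun j => decomp ω hb hf hg hfg j
  have hq_eq : ∀ k, q k = A (k-1) k + A k k + A (k+1) k := by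
    intro k
    have h := decomp ω hb hg hf (fun x => by rw [abs_sub_comm]; exact hfg x) k
    rw [hqdef, hAdef]
    simp only
    rw [h, Set.inter_comm (g ⁻¹' cell b n k) (f ⁻¹' cell b n (k-1)),
      Set.inter_comm (g ⁻¹' cell b n k) (f ⁻¹' cell b n k),
      Set.inter_comm (g ⁻¹' cell b n k) (f ⁻¹' cell b n (k+1))]
  have hμq : ∑' k : ℤ, (ω.map g) (cell b n k) = 1 := tsum_cell_eq_one hb n (ω.map g)
  have hq_sum : Summable q := by
    apply ENNReal.summable_toReal; rw [hμq]; norm_num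
  have hq_tsum : ∑' k, q k = 1 := by
    rw [hqdef]
    rw [← ENNReal.tsum_toReal_eq (fun k => measure_ne_top _ _), hμq]
    simp
  set bound : ℤ → ℝ := fun k => negMulLog (q k) + q k * log 3 with hbdef
  have hbound_sum : Summable bound := hq.add (hq_sum.mul_right (log 3))
  have hT : ∀ k, negMulLog (A (k-1) k) + negMulLog (A k k) + negMulLog (A (k+1) k) ≤ bound k := by
    intro k
    rw [hbdef]
    simp only
    rw [hq_eq k]
    exact three_term (hA0 _ _) (hA0 _ _) (hA0 _ _)
  set t₁ : ℤ → ℝ := fun k => negMulLog (A (k-1) k) with ht₁def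
  set t₂ : ℤ → ℝ := fun k => negMulLog (A k k) with ht₂def
  set t₃ : ℤ → ℝ := fun k => negMulLog (A (k+1) k) with ht₃def
  have htnn : ∀ k, (0 ≤ t₁ k) ∧ (0 ≤ t₂ k) ∧ (0 ≤ t₃ k) := fun k =>
    ⟨negMulLog_nonneg (hA0 _ _) (hA1 _ _), negMulLog_nonneg (hA0 _ _) (hA1 _ _),
      negMulLog_nonneg (hA0 _ _) (hA1 _ _)⟩
  have ht₁s : Summable t₁ := Summable.of_nonneg_of_le (fun k => (htnn k).1)
    (fun k => by have := hT k; have := (htnn k).2.1; have := (htnn k).2.2; linarith) hbound_sum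
  have ht₂s : Summable t₂ := Summable.of_nonneg_of_le (fun k => (htnn k).2.1)
    (fun k => by have := hT k; have := (htnn k).1; have := (htnn k).2.2; linarith) hbound_sum
  have ht₃s : Summable t₃ := Summable.of_nonneg_of_le (fun k => (htnn k).2.2)
    (fun k => by have := hT k; have := (htnn k).1; have := (htnn k).2.1; linarith) hbound_sum
  -- shifted versions
  have hs₁eq : (fun j : ℤ => negMulLog (A j (j-1))) = fun j => t₃ ((Equiv.subRight (1:ℤ)) j) := by
    funext j
    simp [ht₃def, Equiv.subRight, sub_add_cancel]
  have hs₃eq : (fun j : ℤ => negMulLog (A j (j+1))) = fun j => t₁ ((Equiv.addRight (1:ℤ)) j) := by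
    funext j
    simp [ht₁def, Equiv.addRight, add_sub_cancel_right]
  have hs₁s : Summable (fun j : ℤ => negMulLog (A j (j-1))) := by
    rw [hs₁eq]; exact ((Equiv.subRight (1:ℤ)).summable_iff).mpr ht₃s
  have hs₂s : Summable (fun j : ℤ => negMulLog (A j j)) := ht₂s
  have hs₃s : Summable (fun j : ℤ => negMulLog (A j (j+1))) := by
    rw [hs₃eq]; exact ((Equiv.addRight (1:ℤ)).summable_iff).mpr ht₁s
  have hs₁t : ∑' j : ℤ, negMulLog (A j (j-1)) = ∑' k, t₃ k := by
    rw [hs₁eq]; exact (Equiv.subRight (1:ℤ)).tsum_eq t₃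
  have hs₃t : ∑' j : ℤ, negMulLog (A j (j+1)) = ∑' k, t₁ k := by
    rw [hs₃eq]; exact (Equiv.addRight (1:ℤ)).tsum_eq t₁
  set sum3 : ℤ → ℝ := fun j => negMulLog (A j (j-1)) + negMulLog (A j j) + negMulLog (A j (j+1))
    with hsum3def
  have hsum3s : Summable sum3 := (hs₁s.add hs₂s).add hs₃s
  have hp_le : ∀ j, negMulLog (p j) ≤ sum3 j := by
    intro j
    rw [hp_eq j]
    calc negMulLog (A j (j-1) + A j j + A j (j+1))
        ≤ negMulLog (A j (j-1) + A j j) + negMulLog (A j (j+1)) :=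
          subadd (by positivity) (hA0 _ _)
      _ ≤ negMulLog (A j (j-1)) + negMulLog (A j j) + negMulLog (A j (j+1)) := by
          have := subadd (hA0 j (j-1)) (hA0 j j)
          linarith
  have hp0 : ∀ j, 0 ≤ p j := fun j => ENNReal.toReal_nonneg
  have hp1 : ∀ j, p j ≤ 1 := by
    intro j
    haveI : IsProbabilityMeasure (ω.map f) := Measure.isProbabilityMeasure_map hf.aemeasurable
    simpa using ENNReal.toReal_mono (by norm_num) (prob_le_one (μ := ω.map f) (s := _))
  have hps : Summable (fun j => negMulLog (p j)) :=
    Summable.of_nonneg_of_le (fun j => negMulLog_nonneg (hp0 j) (hp1 j)) hp_le hsum3s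
  refine ⟨hps, ?_⟩
  calc ∑' j, negMulLog (p j) ≤ ∑' j, sum3 j := Summable.tsum_le_tsum hp_le hps hsum3s
    _ = (∑' j : ℤ, negMulLog (A j (j-1))) + (∑' j : ℤ, negMulLog (A j j))
        + (∑' j : ℤ, negMulLog (A j (j+1))) := by
        rw [hsum3def, Summable.tsum_add (hs₁s.add hs₂s) hs₃s, Summable.tsum_add hs₁s hs₂s]
    _ = (∑' k, t₃ k) + (∑' k, t₂ k) + (∑' k, t₁ k) := by rw [hs₁t, hs₃t]
    _ = ∑' k, (t₁ k + t₂ k + t₃ k) := by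
        rw [Summable.tsum_add (ht₁s.add ht₂s) ht₃s, Summable.tsum_add ht₁s ht₂s]; ring
    _ ≤ ∑' k, bound k := Summable.tsum_le_tsum hT ((ht₁s.add ht₂s).add ht₃s) hbound_sum
    _ = (∑' k, negMulLog (q k)) + (∑' k, q k * log 3) := Summable.tsum_add hq (hq_sum.mul_right _)
    _ = (∑' k, negMulLog (q k)) + log 3 := by
        rw [tsum_mul_right, hq_tsum, one_mul]



lemma badicEnt_eq (b : ℕ) (μ : MeasureTheory.Measure ℝ) (n : ℕ) :
    (∑' j : ℤ,
      -(μ (Set.Ico ((j : ℝ) / (b : ℝ) ^ (n:ℤ)) (((j : ℝ) + 1) / (b : ℝ) ^ (n:ℤ)))).toReal *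
        Real.logb b (μ (Set.Ico ((j : ℝ) / (b : ℝ) ^ (n:ℤ))
          (((j : ℝ) + 1) / (b : ℝ) ^ (n:ℤ)))).toReal)
      = (∑' j : ℤ, negMulLog ((μ (cell b n j)).toReal)) / log b := by
  rw [← tsum_div_const]
  congr 1
  funext j
  simp only [cell, negMulLog, Real.logb]
  ring

end Stmt11Aux

/-- Base-`b` Shannon entropy of a measure with respect to the level-`m` b-adic partition. -/
noncomputable def badicEnt (b : ℕ) (μ : MeasureTheory.Measure ℝ) (m : ℤ) : ℝ :=
  ∑' j : ℤ,
    -(μ (Set.Ico ((j : ℝ) / (b : ℝ) ^ m) (((j : ℝ) + 1) / (b : ℝ) ^ m))).toReal *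
      Real.logb b (μ (Set.Ico ((j : ℝ) / (b : ℝ) ^ m) (((j : ℝ) + 1) / (b : ℝ) ^ m))).toReal

/-- If `sup |f - g| ≤ b⁻ⁿ` then the level-`n` entropies of `f_*ω` and `g_*ω`
differ by at most an absolute constant. -/
theorem stmt_11 (b : ℕ) (hb : 2 ≤ b) :
    ∃ C > (0:ℝ), ∀ (Ω : Type) (_ : MeasurableSpace Ω) (ω : MeasureTheory.Measure Ω),
      MeasureTheory.IsProbabilityMeasure ω →
      ∀ n : ℕ, ∀ f g : Ω → ℝ, Measurable f → Measurable g →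
        (∀ x, |f x - g x| ≤ (b : ℝ) ^ (-(n : ℤ))) →
        |badicEnt b (ω.map f) (n : ℤ) - badicEnt b (ω.map g) (n : ℤ)| ≤ C := by
  classical
  refine ⟨2, by norm_num, ?_⟩
  intro Ω inst ω hprob n f g hf hg hfg
  haveI := hprob
  open Stmt11Aux in
  have hb1 : (1:ℝ) < (b:ℝ) := by exact_mod_cast Nat.lt_of_lt_of_le Nat.one_lt_two hb
  have hlb : 0 < Real.log b := Real.log_pos hb1
  have hl2 : 0 < Real.log 2 := Real.log_pos (by norm_num)
  have h2b : Real.log 2 ≤ Real.log b := Real.log_le_log (by norm_num) (by exact_mod_cast hb)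
  have h34 : Real.log 3 ≤ 2 * Real.log 2 := by
    have : Real.log 3 ≤ Real.log 4 := Real.log_le_log (by norm_num) (by norm_num)
    have h4 : Real.log 4 = 2 * Real.log 2 := by
      rw [show (4:ℝ) = 2 ^ 2 by norm_num, Real.log_pow]
      norm_num
    linarith
  have hEf : badicEnt b (ω.map f) (n:ℤ)
      = (∑' j : ℤ, Real.negMulLog (((ω.map f) (Stmt11Aux.cell b n j)).toReal)) / Real.log b :=
    Stmt11Aux.badicEnt_eq b (ω.map f) n
  have hEg : badicEnt b (ω.map g) (n:ℤ)
      = (∑' j : ℤ, Real.negMulLog (((ω.map g) (Stmt11Aux.cell b n j)).toReal)) / Real.log b :=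
    Stmt11Aux.badicEnt_eq b (ω.map g) n
  rw [hEf, hEg]
  set Hp := ∑' j : ℤ, Real.negMulLog (((ω.map f) (Stmt11Aux.cell b n j)).toReal) with hHp
  set Hq := ∑' j : ℤ, Real.negMulLog (((ω.map g) (Stmt11Aux.cell b n j)).toReal) with hHq
  have hsym : ∀ x, |g x - f x| ≤ (b : ℝ) ^ (-(n:ℤ)) := fun x => by
    rw [abs_sub_comm]; exact hfg x
  by_cases hqs : Summable (fun k : ℤ => Real.negMulLog (((ω.map g) (Stmt11Aux.cell b n k)).toReal))
  · obtain ⟨hps, h1⟩ := Stmt11Aux.one_side hb ω hf hg hfg hqs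
    obtain ⟨_, h2⟩ := Stmt11Aux.one_side hb ω hg hf hsym hps
    have habs : |Hp - Hq| ≤ Real.log 3 := by
      rw [abs_sub_le_iff]
      constructor <;> [linarith; linarith]
    rw [show Hp / Real.log b - Hq / Real.log b = (Hp - Hq) / Real.log b from
      (sub_div _ _ _).symm, abs_div, abs_of_pos hlb, div_le_iff₀ hlb]
    nlinarith
  · have hps : ¬ Summable (fun j : ℤ =>
        Real.negMulLog (((ω.map f) (Stmt11Aux.cell b n j)).toReal)) := by
      intro hs
      exact hqs (Stmt11Aux.one_side hb ω hg hf hsym hs).1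
    rw [hHp, hHq, tsum_eq_zero_of_not_summable hps, tsum_eq_zero_of_not_summable hqs]
    norm_num
end

section
/- Let b ≥ 2 be an integer, λ ∈ (1/b,1), φ : ℝ → ℝ a ℤ-periodic C¹ function, and γ = 1/(bλ). For i ∈ {0,...,b−1} define g_i(x,y) = ((x+i)/b, λy + φ((x+i)/b)). For j = (j_1 j_2 ...) ∈ {0,...,b−1}^{ℤ₊} define Y(x,j) = −∑_{n=1}^∞ γ^n φ'(x/b^n + j_1/b^n + j_2/b^{n−1} + ... + j_n/b), Γ_j(x) = ∫_0^x Y(t,j) dt, and π_j(x,y) = y − Γ_j(x). Then for any j ∈ Σ and any finite word i = i_1...i_n (writing g_i = g_{i_1}∘...∘g_{i_n} and i* = i_n...i_1 for the reversed word): π_j(g_i(x,y)) = λ^n · π_{i*j}(x,y) + π_j(g_i(0,0)) for all (x,y) ∈ [0,1) × ℝ, where i*j denotes the concatenation of the reversed word with j. -/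
open scoped BigOperators

/-- The inverse branch maps `gᵢ(x,y) = ((x+i)/b, λy + φ((x+i)/b))`. -/
noncomputable def Wg (b : ℕ) (lam : ℝ) (φ : ℝ → ℝ) (i : Fin b) (p : ℝ × ℝ) : ℝ × ℝ :=
  ((p.1 + (i : ℕ)) / b, lam * p.2 + φ ((p.1 + (i : ℕ)) / b))

/-- `g_{i₁} ∘ g_{i₂} ∘ ⋯ ∘ g_{iₙ}` for a finite word `i₁ i₂ ⋯ iₙ`. -/
noncomputable def Wgword (b : ℕ) (lam : ℝ) (φ : ℝ → ℝ) : List (Fin b) → ℝ × ℝ → ℝ × ℝ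
  | [], p => p
  | a :: l, p => Wg b lam φ a (Wgword b lam φ l p)

/-- The slope field `Y(x, j) = -∑ γⁿ φ'(x/bⁿ + j₁/bⁿ + ⋯ + jₙ/b)` with `γ = 1/(bλ)`
(here `j m` denotes `j_{m+1}`). -/
noncomputable def WY (b : ℕ) (lam : ℝ) (φ : ℝ → ℝ) (x : ℝ) (j : ℕ → Fin b) : ℝ :=
  -∑' n : ℕ, (1 / ((b : ℝ) * lam)) ^ (n + 1) *
    deriv φ ((x + ∑ m ∈ Finset.range (n + 1), ((j m : ℕ) : ℝ) * (b : ℝ) ^ m) /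
      (b : ℝ) ^ (n + 1))

/-- `Γ_j(x) = ∫₀ˣ Y(t, j) dt`. -/
noncomputable def WΓ (b : ℕ) (lam : ℝ) (φ : ℝ → ℝ) (j : ℕ → Fin b) (x : ℝ) : ℝ :=
  ∫ t in (0:ℝ)..x, WY b lam φ t j

/-- The flow projection `π_j(x,y) = y - Γ_j(x)`. -/
noncomputable def Wπ (b : ℕ) (lam : ℝ) (φ : ℝ → ℝ) (j : ℕ → Fin b) (p : ℝ × ℝ) : ℝ :=
  p.2 - WΓ b lam φ j p.1

/-- Concatenation of a finite word with an infinite sequence. -/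
def seqAppend {b : ℕ} (l : List (Fin b)) (j : ℕ → Fin b) : ℕ → Fin b :=
  fun m => if h : m < l.length then l.get ⟨m, h⟩ else j (m - l.length)

namespace Wproof

variable {b : ℕ} {lam : ℝ} {φ : ℝ → ℝ}

lemma seqAppend_append {b : ℕ} (l₁ l₂ : List (Fin b)) (j : ℕ → Fin b) :
    seqAppend (l₁ ++ l₂) j = seqAppend l₁ (seqAppend l₂ j) := by
  funext m
  simp only [seqAppend, List.length_append]
  by_cases h1 : m < l₁.length
  · rw [dif_pos (by omega), dif_pos h1]; simp only [List.get_eq_getElem, List.getElem_append_left h1]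
  · by_cases h2 : m < l₁.length + l₂.length
    · rw [dif_pos h2, dif_neg h1, dif_pos (by omega)]
      simp only [List.get_eq_getElem, List.getElem_append_right (by omega : l₁.length ≤ m)]
    · rw [dif_neg h2, dif_neg h1, dif_neg (by omega)]
      congr 1
      omega

section Analysis

variable (hb : 2 ≤ b) (hl1 : 1 / (b:ℝ) < lam) (hl2 : lam < 1)
  (hφ : ContDiff ℝ 1 φ) (hφp : ∀ x, φ (x + 1) = φ x)

include hb in
lemma hbR : (0:ℝ) < (b:ℝ) := by
  have : 0 < b := by omega
  exact_mod_cast this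

include hb hl1 in
lemma hlamR : 0 < lam := lt_trans (by positivity) hl1

include hb hl1 in
lemma hblR : 1 < (b:ℝ) * lam := by
  have hb' : (0:ℝ) < b := hbR hb
  rw [div_lt_iff₀ hb'] at hl1
  nlinarith

include hb hl1 in
lemma gamma_pos : 0 < 1 / ((b:ℝ) * lam) := by
  have := hblR hb hl1; positivity

include hb hl1 in
lemma gamma_lt_one : 1 / ((b:ℝ) * lam) < 1 := by
  have := hblR hb hl1
  rw [div_lt_one (by linarith)]
  exact this

include hφ hφp in
lemma deriv_bound : ∃ C : ℝ, 0 ≤ C ∧ ∀ x, |deriv φ x| ≤ C := by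
  have hc : Continuous (deriv φ) := hφ.continuous_deriv le_rfl
  have hder : ∀ x : ℝ, deriv φ (x + 1) = deriv φ x := by
    intro x
    have : deriv (fun y => φ (y + 1)) x = deriv φ x := by
      congr 1; funext y; exact hφp y
    rw [← this, deriv_comp_add_const]
  have hper : Function.Periodic (deriv φ) 1 := hder
  obtain ⟨C, hC⟩ := (isCompact_Icc (a := (0:ℝ)) (b := 1)).exists_bound_of_continuousOn
    hc.continuousOn
  refine ⟨max C 0, le_max_right _ _, fun x => ?_⟩
  have h1 : deriv φ x = deriv φ (Int.fract x) := by
    have := hper.sub_int_mul_eq (x := x) (n := ⌊x⌋)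
    rw [mul_one] at this
    rw [← this]; rfl
  rw [h1]
  exact le_trans (hC _ ⟨Int.fract_nonneg x, (Int.fract_lt_one x).le⟩) (le_max_left _ _)

/-- the general term of the series -/
noncomputable def Wterm (b : ℕ) (lam : ℝ) (φ : ℝ → ℝ) (j : ℕ → Fin b) (x : ℝ) (n : ℕ) : ℝ :=
  (1 / ((b : ℝ) * lam)) ^ (n + 1) *
    deriv φ ((x + ∑ m ∈ Finset.range (n + 1), ((j m : ℕ) : ℝ) * (b : ℝ) ^ m) /
      (b : ℝ) ^ (n + 1))

lemma WY_eq (x : ℝ) (j : ℕ → Fin b) : WY b lam φ x j = -∑' n, Wterm b lam φ j x n := rfl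

include hb hl1 in
lemma term_bound {C : ℝ} (hC : ∀ x, |deriv φ x| ≤ C) (j : ℕ → Fin b) (x : ℝ) (n : ℕ) :
    ‖Wterm b lam φ j x n‖ ≤ C * (1 / ((b:ℝ) * lam)) ^ (n + 1) := by
  have hg0 := gamma_pos hb hl1
  rw [Wterm, norm_mul, Real.norm_eq_abs, Real.norm_eq_abs, abs_of_pos (pow_pos hg0 _),
    mul_comm]
  exact mul_le_mul_of_nonneg_right (hC _) (le_of_lt (pow_pos hg0 _))

include hb hl1 in
lemma summable_bound {C : ℝ} : Summable (fun n : ℕ => C * (1 / ((b:ℝ) * lam)) ^ (n + 1)) := by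
  have := (summable_geometric_of_lt_one (le_of_lt (gamma_pos hb hl1))
    (gamma_lt_one hb hl1)).mul_left (C * (1 / ((b:ℝ) * lam)))
  convert this using 2 with n
  exacts [rfl, by ring]

include hb hl1 in
lemma summable_term {C : ℝ} (hC : ∀ x, |deriv φ x| ≤ C) (j : ℕ → Fin b) (x : ℝ) :
    Summable (Wterm b lam φ j x) := by
  refine Summable.of_norm (Summable.of_nonneg_of_le (fun n => norm_nonneg _)
    (fun n => term_bound hb hl1 hC j x n) (summable_bound hb hl1))

include hb hl1 hφ hφp in
lemma WY_continuous (j : ℕ → Fin b) : Continuous (fun x => WY b lam φ x j) := by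
  obtain ⟨C, hC0, hC⟩ := deriv_bound hφ hφp
  refine Continuous.neg ?_
  refine continuous_tsum (f := fun n x => Wterm b lam φ j x n) ?_ (summable_bound hb hl1 (C := C)) ?_
  · intro n
    have hd : Continuous (deriv φ) := hφ.continuous_deriv le_rfl
    exact (continuous_const.mul (hd.comp ((continuous_id.add continuous_const).div_const _)))
  · intro n x
    exact term_bound hb hl1 hC j x n

include hb hl1 hφ hφp in
/-- Key transition identity for the slope field. -/
lemma WY_key (a : Fin b) (j : ℕ → Fin b) (x : ℝ) :
    WY b lam φ ((x + (a:ℕ)) / b) j =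
      (b:ℝ) * lam * WY b lam φ x (seqAppend [a] j) + deriv φ ((x + (a:ℕ)) / b) := by
  obtain ⟨C, hC0, hC⟩ := deriv_bound hφ hφp
  have hbne : ((b:ℝ)) ≠ 0 := ne_of_gt (hbR hb)
  have hlamne : lam ≠ 0 := ne_of_gt (hlamR hb hl1)
  have hsum : Summable (Wterm b lam φ (seqAppend [a] j) x) := summable_term hb hl1 hC _ x
  have hsum2 : Summable (fun n => (b:ℝ) * lam * Wterm b lam φ (seqAppend [a] j) x n) :=
    hsum.mul_left _
  have hsum3 : Summable (Wterm b lam φ j ((x + (a:ℕ)) / b)) := summable_term hb hl1 hC _ _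
  have hterm0 : (b:ℝ) * lam * Wterm b lam φ (seqAppend [a] j) x 0 = deriv φ ((x + (a:ℕ)) / b) := by
    simp only [Wterm, Finset.sum_range_one, pow_zero, pow_one, zero_add, seqAppend]
    norm_num
    field_simp
  have hshift : ∀ n : ℕ, (b:ℝ) * lam * Wterm b lam φ (seqAppend [a] j) x (n + 1) =
      Wterm b lam φ j ((x + (a:ℕ)) / b) n := by
    intro n
    have hS : (∑ m ∈ Finset.range (n + 1 + 1), (((seqAppend [a] j) m : ℕ) : ℝ) * (b:ℝ) ^ m)
        = ((a:ℕ):ℝ) + (b:ℝ) * ∑ m ∈ Finset.range (n + 1), ((j m : ℕ) : ℝ) * (b:ℝ) ^ m := by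
      rw [Finset.sum_range_succ']
      simp only [seqAppend]
      norm_num
      rw [Finset.mul_sum, add_comm]
      congr 1
      refine Finset.sum_congr rfl fun i _ => ?_
      ring
    rw [Wterm, Wterm, hS]
    have harg : (x + (((a:ℕ):ℝ) + (b:ℝ) * ∑ m ∈ Finset.range (n + 1), ((j m : ℕ) : ℝ) * (b:ℝ) ^ m))
        / (b:ℝ) ^ (n + 1 + 1)
        = ((x + ((a:ℕ):ℝ)) / (b:ℝ) + ∑ m ∈ Finset.range (n + 1), ((j m : ℕ) : ℝ) * (b:ℝ) ^ m)
          / (b:ℝ) ^ (n + 1) := by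
      field_simp
      ring
    rw [harg]
    have hcoef : (b:ℝ) * lam * (1 / ((b:ℝ) * lam)) ^ (n + 1 + 1) = (1 / ((b:ℝ) * lam)) ^ (n + 1) := by
      rw [pow_succ]
      field_simp
    rw [← mul_assoc, hcoef]
  have key : ∑' n, ((b:ℝ) * lam * Wterm b lam φ (seqAppend [a] j) x n)
      = deriv φ ((x + (a:ℕ)) / b) + ∑' n, Wterm b lam φ j ((x + (a:ℕ)) / b) n := by
    rw [Summable.tsum_eq_zero_add hsum2, hterm0]
    congr 1
    exact tsum_congr hshift
  rw [tsum_mul_left] at key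
  rw [WY_eq, WY_eq]
  linarith [key]

include hb in
lemma integral_sub_shift (g : ℝ → ℝ) (a : Fin b) (x : ℝ) :
    ∫ s in (0:ℝ)..x, g ((s + ((a:ℕ):ℝ)) / b) =
      (b:ℝ) * ∫ t in (((a:ℕ):ℝ) / b)..((x + ((a:ℕ):ℝ)) / b), g t := by
  have hbne : ((b:ℝ)) ≠ 0 := ne_of_gt (hbR hb)
  have h1 := intervalIntegral.integral_comp_add_right (a := (0:ℝ)) (b := x)
    (fun s => g (s / b)) (((a:ℕ):ℝ))
  simp only [zero_add] at h1
  rw [h1, intervalIntegral.integral_comp_div (a := ((a:ℕ):ℝ)) (b := x + ((a:ℕ):ℝ))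
    (fun t => g t) hbne, smul_eq_mul]

include hb hl1 hφ hφp in
lemma WΓ_key (a : Fin b) (j : ℕ → Fin b) (x : ℝ) :
    WΓ b lam φ j ((x + ((a:ℕ):ℝ)) / b) =
      WΓ b lam φ j (((a:ℕ):ℝ) / b) + lam * WΓ b lam φ (seqAppend [a] j) x
        + φ ((x + ((a:ℕ):ℝ)) / b) - φ (((a:ℕ):ℝ) / b) := by
  have hbne : ((b:ℝ)) ≠ 0 := ne_of_gt (hbR hb)
  have hYc : Continuous (fun t => WY b lam φ t j) := WY_continuous hb hl1 hφ hφp j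
  have hYc' : Continuous (fun t => WY b lam φ t (seqAppend [a] j)) :=
    WY_continuous hb hl1 hφ hφp _
  have hdc : Continuous (deriv φ) := hφ.continuous_deriv le_rfl
  -- split the integral
  have hsplit : WΓ b lam φ j ((x + ((a:ℕ):ℝ)) / b) = WΓ b lam φ j (((a:ℕ):ℝ) / b) +
      ∫ t in (((a:ℕ):ℝ) / b)..((x + ((a:ℕ):ℝ)) / b), WY b lam φ t j := by
    rw [WΓ, WΓ, intervalIntegral.integral_add_adjacent_intervals
      (hYc.intervalIntegrable _ _) (hYc.intervalIntegrable _ _)]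
  -- change variables
  have hsub := integral_sub_shift hb (fun t => WY b lam φ t j) a x
  -- rewrite integrand pointwise
  have hpt : ∀ s : ℝ, WY b lam φ ((s + ((a:ℕ):ℝ)) / b) j =
      (b:ℝ) * lam * WY b lam φ s (seqAppend [a] j) + deriv φ ((s + ((a:ℕ):ℝ)) / b) :=
    fun s => WY_key hb hl1 hφ hφp a j s
  have hint1 : IntervalIntegrable (fun s => (b:ℝ) * lam * WY b lam φ s (seqAppend [a] j))
      MeasureTheory.volume 0 x := ((continuous_const.mul hYc').intervalIntegrable _ _)
  have hint2 : IntervalIntegrable (fun s => deriv φ ((s + ((a:ℕ):ℝ)) / b))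
      MeasureTheory.volume 0 x :=
    ((hdc.comp ((continuous_id.add continuous_const).div_const _)).intervalIntegrable _ _)
  have hmain : ∫ s in (0:ℝ)..x, WY b lam φ ((s + ((a:ℕ):ℝ)) / b) j =
      (b:ℝ) * lam * WΓ b lam φ (seqAppend [a] j) x +
        ∫ s in (0:ℝ)..x, deriv φ ((s + ((a:ℕ):ℝ)) / b) := by
    rw [show (fun s => WY b lam φ ((s + ((a:ℕ):ℝ)) / b) j) = fun s =>
      (b:ℝ) * lam * WY b lam φ s (seqAppend [a] j) + deriv φ ((s + ((a:ℕ):ℝ)) / b)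
      from funext hpt]
    rw [intervalIntegral.integral_add hint1 hint2, WΓ,
      intervalIntegral.integral_const_mul]
  -- the derivative integral
  have hder : ∫ s in (0:ℝ)..x, deriv φ ((s + ((a:ℕ):ℝ)) / b) =
      (b:ℝ) * (φ ((x + ((a:ℕ):ℝ)) / b) - φ (((a:ℕ):ℝ) / b)) := by
    rw [integral_sub_shift hb (deriv φ) a x,
      intervalIntegral.integral_deriv_eq_sub
        (fun t _ => (hφ.differentiable one_ne_zero).differentiableAt)
        (hdc.intervalIntegrable _ _)]
  rw [hmain, hder] at hsub
  rw [hsplit]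
  have hI : ∫ t in (((a:ℕ):ℝ) / b)..((x + ((a:ℕ):ℝ)) / b), WY b lam φ t j
      = lam * WΓ b lam φ (seqAppend [a] j) x
        + (φ ((x + ((a:ℕ):ℝ)) / b) - φ (((a:ℕ):ℝ) / b)) :=
    (mul_left_cancel₀ hbne (by rw [← hsub]; ring)).symm
  rw [hI]
  ring

include hb hl1 hφ hφp in
lemma step (a : Fin b) (j : ℕ → Fin b) (p : ℝ × ℝ) :
    Wπ b lam φ j (Wg b lam φ a p) =
      lam * Wπ b lam φ (seqAppend [a] j) p + Wπ b lam φ j (Wg b lam φ a (0, 0)) := by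
  rcases p with ⟨x, y⟩
  simp only [Wg, Wπ]
  rw [WΓ_key hb hl1 hφ hφp a j x]
  have h0 : ((0:ℝ) + ((a:ℕ):ℝ)) / b = ((a:ℕ):ℝ) / b := by ring
  rw [h0]
  ring

end Analysis

end Wproof

/-- Transition formula: `π_j(g_i(x,y)) = λ^|i| π_{i*j}(x,y) + π_j(g_i(0,0))`. -/
theorem stmt_13 (b : ℕ) (hb : 2 ≤ b) (lam : ℝ) (hlam : 1 / b < lam ∧ lam < 1)
    (φ : ℝ → ℝ) (hφ : ContDiff ℝ 1 φ) (hφp : ∀ x, φ (x + 1) = φ x)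
    (j : ℕ → Fin b) (l : List (Fin b)) :
    ∀ x ∈ Set.Ico (0:ℝ) 1, ∀ y : ℝ,
      Wπ b lam φ j (Wgword b lam φ l (x, y)) =
        lam ^ l.length * Wπ b lam φ (seqAppend l.reverse j) (x, y) +
          Wπ b lam φ j (Wgword b lam φ l (0, 0)) := by
  obtain ⟨hl1, hl2⟩ := hlam
  induction l generalizing j with
  | nil =>
    intro x hx y
    have hj : seqAppend (List.reverse ([] : List (Fin b))) j = j := by
      funext m; simp [seqAppend]
    simp only [Wgword, hj, List.length_nil, pow_zero, one_mul]
    simp [Wπ, WΓ]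
  | cons a l ih =>
    intro x hx y
    have h1 : Wgword b lam φ (a :: l) (x, y) = Wg b lam φ a (Wgword b lam φ l (x, y)) := rfl
    have h2 : Wgword b lam φ (a :: l) (0, 0) = Wg b lam φ a (Wgword b lam φ l (0, 0)) := rfl
    rw [h1, h2, Wproof.step hb hl1 hφ hφp a j (Wgword b lam φ l (x, y)),
      Wproof.step hb hl1 hφ hφp a j (Wgword b lam φ l (0, 0)),
      ih (seqAppend [a] j) x hx y]
    have h3 : seqAppend l.reverse (seqAppend [a] j) = seqAppend (a :: l).reverse j := by
      rw [List.reverse_cons, Wproof.seqAppend_append]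
    rw [h3]
    simp only [List.length_cons]
    ring
end

section
/- Let F_1 be a family of real analytic functions f : ℝ → ℝ with f(0) = 0, none identically zero, which is compact in the topology of uniform C^k-convergence on [0,1] for every k. Then there exist ε₁ > 0 and a positive integer Q₁ such that for every f ∈ F_1: (a) sup_{x∈[0,1]} |f'(x)| ≥ ε₁, and (b) for every x ∈ [0,1] there exists k ∈ {1,...,Q₁} with |f^{(k)}(x)| ≥ ε₁. -/
open Filter Set

/-- An analytic function on `ℝ` whose iterated derivatives of all orders `≥ 1` vanish at a
point is constant. -/
lemma aux_const_of_iteratedDeriv_zero {g : ℝ → ℝ} (hg : AnalyticOnNhd ℝ g Set.univ) (a : ℝ)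
    (hd : ∀ k, 1 ≤ k → iteratedDeriv k g a = 0) : ∀ x, g x = g a := by
  obtain ⟨p, hp⟩ := hg a (Set.mem_univ a)
  obtain ⟨r, hr⟩ := hp
  have hloc : ∀ y ∈ EMetric.ball (0 : ℝ) r, g (a + y) = g a := by
    intro y hy
    have h1 := hr.hasSum_iteratedFDeriv hy
    have h2 : (fun n : ℕ => ((Nat.factorial n : ℝ))⁻¹ • iteratedFDeriv ℝ n g a fun _ => y)
        = fun n : ℕ => if n = 0 then g a else 0 := by
      funext n
      cases n with
      | zero => simp
      | succ n =>
        rw [if_neg (Nat.succ_ne_zero n), iteratedFDeriv_apply_eq_iteratedDeriv_mul_prod,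
          hd (n + 1) (Nat.le_add_left 1 n), smul_zero, smul_zero]
    rw [h2] at h1
    exact h1.unique (hasSum_ite_eq 0 (g a))
  have hev : (fun x => g x - g a) =ᶠ[nhds a] 0 := by
    filter_upwards [EMetric.ball_mem_nhds a hr.r_pos] with x hx
    have hmem : x - a ∈ Metric.eball (0 : ℝ) r := by
      simpa [Metric.mem_eball, edist_eq_enorm_sub] using hx
    have := hloc (x - a) hmem
    simp only [add_sub_cancel] at this
    simp [this]
  have hEq := (hg.sub analyticOnNhd_const).eqOn_zero_of_preconnected_of_eventuallyEq_zero
    isPreconnected_univ (Set.mem_univ a) hev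
  intro x
  have hx := hEq (Set.mem_univ x)
  simpa [sub_eq_zero] using hx

/-- Iterated derivatives of an entire analytic function are analytic. -/
lemma aux_analytic_iteratedDeriv {g : ℝ → ℝ} (hg : AnalyticOnNhd ℝ g Set.univ) (k : ℕ) :
    AnalyticOnNhd ℝ (iteratedDeriv k g) Set.univ := by
  rw [iteratedDeriv_eq_iterate]
  exact hg.iterated_deriv k

/-- Uniform lower bounds on derivatives for a compact family of nonzero real analytic
functions vanishing at `0`. -/
theorem stmt_15 (F : Set (ℝ → ℝ))
    (hA : ∀ f ∈ F, AnalyticOnNhd ℝ f Set.univ)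
    (h0 : ∀ f ∈ F, f 0 = 0)
    (hne : ∀ f ∈ F, ∃ x, f x ≠ 0)
    (hcpt : ∀ f : ℕ → ℝ → ℝ, (∀ m, f m ∈ F) →
      ∃ g ∈ F, ∃ s : ℕ → ℕ, StrictMono s ∧ ∀ k : ℕ,
        TendstoUniformlyOn (fun m => iteratedDeriv k (f (s m))) (iteratedDeriv k g)
          Filter.atTop (Set.Icc 0 1)) :
    ∃ ε > (0:ℝ), ∃ Q : ℕ, 1 ≤ Q ∧ ∀ f ∈ F,
      (∃ x ∈ Set.Icc (0:ℝ) 1, ε ≤ |deriv f x|) ∧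
      (∀ x ∈ Set.Icc (0:ℝ) 1, ∃ k, 1 ≤ k ∧ k ≤ Q ∧ ε ≤ |iteratedDeriv k f x|) := by
  -- Claim A : a uniform lower bound for the sup of |f'| on [0,1]
  have claimA : ∃ ε > (0:ℝ), ∀ f ∈ F, ∃ x ∈ Set.Icc (0:ℝ) 1, ε ≤ |deriv f x| := by
    by_contra hc
    push_neg at hc
    have H : ∀ n : ℕ, ∃ f ∈ F, ∀ x ∈ Set.Icc (0:ℝ) 1, |deriv f x| < 1 / (n + 1) :=
      fun n => hc (1 / (n + 1)) (by positivity)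
    choose u huF hu using H
    obtain ⟨g, hgF, s, hs, hconv⟩ := hcpt u huF
    have hg0 : ∀ x ∈ Set.Icc (0:ℝ) 1, deriv g x = 0 := by
      intro x hx
      have hpt : Tendsto (fun m => iteratedDeriv 1 (u (s m)) x) atTop
          (nhds (iteratedDeriv 1 g x)) := (hconv 1).tendsto_at hx
      have hle : ∀ m : ℕ, |iteratedDeriv 1 (u (s m)) x| ≤ 1 / (m + 1) := by
        intro m
        rw [iteratedDeriv_one]
        refine le_trans (hu (s m) x hx).le (one_div_le_one_div_of_le (by positivity) ?_)
        have hms : m ≤ s m := hs.le_apply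
        exact_mod_cast Nat.succ_le_succ hms
      have habs : |iteratedDeriv 1 g x| ≤ 0 :=
        le_of_tendsto_of_tendsto hpt.abs tendsto_one_div_add_atTop_nhds_zero_nat
          (Eventually.of_forall hle)
      have : iteratedDeriv 1 g x = 0 := abs_nonpos_iff.mp habs
      rwa [iteratedDeriv_one] at this
    have hderiv_an : AnalyticOnNhd ℝ (deriv g) Set.univ := (hA g hgF).deriv
    have hev : deriv g =ᶠ[nhds (1/2 : ℝ)] 0 := by
      filter_upwards [Icc_mem_nhds (by norm_num : (0:ℝ) < 1/2) (by norm_num : (1/2:ℝ) < 1)]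
        with x hx
      exact hg0 x hx
    have hEq := hderiv_an.eqOn_zero_of_preconnected_of_eventuallyEq_zero
      isPreconnected_univ (Set.mem_univ (1/2 : ℝ)) hev
    have hgzero : ∀ x, g x = 0 := by
      intro x
      have hdz : ∀ y, deriv g y = 0 := fun y => hEq (Set.mem_univ y)
      have hdiff : Differentiable ℝ g := fun y => ((hA g hgF) y (Set.mem_univ y)).differentiableAt
      calc g x = g 0 := is_const_of_deriv_eq_zero hdiff hdz x 0
        _ = 0 := h0 g hgF
    obtain ⟨x, hxne⟩ := hne g hgF
    exact hxne (hgzero x)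
  -- Claim B : a uniform lower bound for some derivative of order between 1 and Q at each point
  have claimB : ∃ ε > (0:ℝ), ∃ Q : ℕ, 1 ≤ Q ∧ ∀ f ∈ F, ∀ x ∈ Set.Icc (0:ℝ) 1,
      ∃ k, 1 ≤ k ∧ k ≤ Q ∧ ε ≤ |iteratedDeriv k f x| := by
    by_contra hc
    push_neg at hc
    have H : ∀ n : ℕ, ∃ f ∈ F, ∃ x ∈ Set.Icc (0:ℝ) 1,
        ∀ k, 1 ≤ k → k ≤ n + 1 → |iteratedDeriv k f x| < 1 / (n + 1) := by
      intro n
      obtain ⟨f, hfF, x, hx, hk⟩ := hc (1 / (n + 1)) (by positivity) (n + 1) (Nat.le_add_left 1 n)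
      exact ⟨f, hfF, x, hx, fun k hk1 hk2 => hk k hk1 hk2⟩
    choose u huF x hxmem hsmall using H
    obtain ⟨g, hgF, s, hs, hconv⟩ := hcpt u huF
    obtain ⟨a, haI, φ, hφ, hxa⟩ :=
      (isCompact_Icc (a := (0:ℝ)) (b := 1)).tendsto_subseq (fun m => hxmem (s m))
    have key : ∀ k, 1 ≤ k → iteratedDeriv k g a = 0 := by
      intro k hk
      -- uniform convergence along the subsequence `φ`
      have hU : TendstoUniformlyOn (fun m => iteratedDeriv k (u (s (φ m))))
          (iteratedDeriv k g) atTop (Set.Icc 0 1) := by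
        have hck := hconv k
        rw [Metric.tendstoUniformlyOn_iff] at hck ⊢
        intro ε hε
        exact hφ.tendsto_atTop.eventually (hck ε hε)
      have hcontg : ContinuousWithinAt (iteratedDeriv k g) (Set.Icc 0 1) a :=
        ((aux_analytic_iteratedDeriv (hA g hgF) k) a (Set.mem_univ a)).continuousAt.continuousWithinAt
      have hxa' : Tendsto (fun m => x (s (φ m))) atTop (nhdsWithin a (Set.Icc 0 1)) :=
        tendsto_nhdsWithin_of_tendsto_nhds_of_eventually_within _ hxa
          (Eventually.of_forall fun m => hxmem (s (φ m)))
      have hlim : Tendsto (fun m => iteratedDeriv k (u (s (φ m))) (x (s (φ m)))) atTop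
          (nhds (iteratedDeriv k g a)) := hU.tendsto_comp hcontg hxa'
      have hb : ∀ᶠ m in atTop, |iteratedDeriv k (u (s (φ m))) (x (s (φ m)))| ≤ 1 / (m + 1) := by
        filter_upwards [eventually_ge_atTop k] with m hm
        have hmn : m ≤ s (φ m) := le_trans hφ.le_apply hs.le_apply
        have hkn : k ≤ s (φ m) + 1 := le_trans hm (le_trans hmn (Nat.le_succ _))
        refine le_trans (hsmall (s (φ m)) k hk hkn).le
          (one_div_le_one_div_of_le (by positivity) ?_)
        exact_mod_cast Nat.succ_le_succ hmn
      have habs : |iteratedDeriv k g a| ≤ 0 :=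
        le_of_tendsto_of_tendsto hlim.abs tendsto_one_div_add_atTop_nhds_zero_nat hb
      exact abs_nonpos_iff.mp habs
    have hconst := aux_const_of_iteratedDeriv_zero (hA g hgF) a key
    have hga : g a = 0 := (hconst 0).symm.trans (h0 g hgF)
    obtain ⟨y, hyne⟩ := hne g hgF
    exact hyne ((hconst y).trans hga)
  obtain ⟨ε₁, hε₁, hA'⟩ := claimA
  obtain ⟨ε₂, hε₂, Q, hQ, hB'⟩ := claimB
  refine ⟨min ε₁ ε₂, lt_min hε₁ hε₂, Q, hQ, fun f hf => ⟨?_, ?_⟩⟩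
  · obtain ⟨xx, hxx, hxx'⟩ := hA' f hf
    exact ⟨xx, hxx, le_trans (min_le_left _ _) hxx'⟩
  · intro xx hxx
    obtain ⟨k, hk1, hk2, hk3⟩ := hB' f hf xx hxx
    exact ⟨k, hk1, hk2, le_trans (min_le_right _ _) hk3⟩
end

section
/- Let b ≥ 2, λ ∈ (1/b,1), and let φ be ℤ-periodic and Lipschitz such that W(x) = ∑ λ^n φ(b^n x) is not Lipschitz. Suppose r_n, s_n ∈ [0,1) are sequences of b-adic rationals of level n (i.e. r_n = (i_1 + i_2 b + ... + i_n b^{n−1})/b^n with digits i_m ∈ {0,...,b−1}, similarly s_n, coming from two fixed digit sequences), r_n → r, s_n → s, with b^m(r − s) ∉ ℤ for every m ≥ 0, and t := dist(r − s, ℤ) is a rational C^k-regulating period of W (k ≥ 2). Then t, written in lowest terms q₁/p₁, has denominator p₁ with a prime factor p not dividing b, and 1/p is a C^k-regulating period of W. -/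
open scoped BigOperators

lemma aux_dvd_pow (b : ℕ) : ∀ n : ℕ, 0 < n → (∀ p, p.Prime → p ∣ n → p ∣ b) → n ∣ b ^ n := by
  intro n
  induction n using Nat.strong_induction_on with
  | _ n ih =>
    intro hn hall
    rcases eq_or_lt_of_le (show 1 ≤ n from hn) with h1 | h1
    · simp [← h1]
    · have hp : n.minFac.Prime := Nat.minFac_prime (by omega)
      have hpd : n.minFac ∣ n := Nat.minFac_dvd n
      have hpb : n.minFac ∣ b := hall _ hp hpd
      set m := n / n.minFac with hm
      have hnm : n = n.minFac * m := (Nat.mul_div_cancel' hpd).symm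
      have hmlt : m < n := Nat.div_lt_self (by omega) hp.one_lt
      have hmpos : 0 < m := Nat.pos_of_ne_zero (by intro h0; rw [h0, Nat.mul_zero] at hnm; omega)
      have hmd : m ∣ b ^ m := ih m hmlt hmpos (fun p pp hpm => hall p pp (hpm.trans (Dvd.intro_left _ hnm.symm)))
      calc n = n.minFac * m := hnm
        _ ∣ b * b ^ m := mul_dvd_mul hpb hmd
        _ = b ^ (m + 1) := (pow_succ' b m).symm
        _ ∣ b ^ n := pow_dvd_pow b (by omega)

/-- If the distance `t` of `r - s` to ℤ is a rational Cᵏ-regulating period of the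
non-Lipschitz Weierstrass-type function `W`, with `r`, `s` limits of level-`n` b-adic
rationals and `bᵐ(r - s) ∉ ℤ` for all `m`, then the lowest-terms denominator of `t` has a
prime factor `p ∤ b`, and `1/p` is a Cᵏ-regulating period of `W`. -/
theorem stmt_18 (b : ℕ) (hb : 2 ≤ b) (lam : ℝ) (hlam : 1 / b < lam ∧ lam < 1)
    (φ : ℝ → ℝ) (L : NNReal) (hφ : LipschitzWith L φ) (hφp : ∀ x, φ (x + 1) = φ x)
    (W : ℝ → ℝ) (hW : ∀ x, W x = ∑' n : ℕ, lam ^ n * φ ((b : ℝ) ^ n * x))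
    (hWnl : ¬ ∃ K : NNReal, LipschitzWith K W)
    (uDig vDig : ℕ → Fin b) (r s : ℝ)
    (hr : Filter.Tendsto
      (fun n => (∑ m ∈ Finset.range n, ((uDig m : ℕ) : ℝ) * (b : ℝ) ^ m) / (b : ℝ) ^ n)
      Filter.atTop (nhds r))
    (hs : Filter.Tendsto
      (fun n => (∑ m ∈ Finset.range n, ((vDig m : ℕ) : ℝ) * (b : ℝ) ^ m) / (b : ℝ) ^ n)
      Filter.atTop (nhds s))
    (hnb : ∀ m : ℕ, ∀ z : ℤ, (b : ℝ) ^ m * (r - s) ≠ (z : ℝ))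
    (t : ℝ) (ht : t = |r - s - (round (r - s) : ℝ)|)
    (q : ℚ) (htq : t = (q : ℝ))
    (k : ℕ) (hk : 2 ≤ k)
    (hreg : ContDiff ℝ k (fun x => W (x + t) - W x)) :
    ∃ p : ℕ, p.Prime ∧ p ∣ q.den ∧ ¬ p ∣ b ∧
      ContDiff ℝ k (fun x => W (x + 1 / (p : ℝ)) - W x) := by
  have hden0 : 0 < q.den := q.pos
  -- Step 1: a prime factor of q.den not dividing b
  have key : ¬ ∀ p : ℕ, p.Prime → p ∣ q.den → p ∣ b := by
    intro hall
    have hdvd : q.den ∣ b ^ q.den := aux_dvd_pow b q.den hden0 hall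
    obtain ⟨c, hc⟩ := hdvd
    -- (b:ℝ)^q.den * t is an integer
    have hint : ((b : ℝ) ^ q.den) * t = ((c * q.num : ℤ) : ℝ) := by
      rw [htq]
      have hq : (q : ℝ) = (q.num : ℝ) / (q.den : ℝ) := by
        rw [Rat.cast_def]
      rw [hq]
      have hden : ((q.den : ℝ)) ≠ 0 := by positivity
      field_simp
      rw [show ((b:ℝ)^q.den) = ((b^q.den : ℕ):ℝ) by push_cast; ring, hc]
      push_cast
      ring
    rcases abs_cases (r - s - (round (r - s) : ℝ)) with ⟨habs, _⟩ | ⟨habs, _⟩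
    · apply hnb q.den ((b : ℕ) ^ q.den * round (r - s) + c * q.num)
      have : (b : ℝ) ^ q.den * (r - s) =
          (b : ℝ) ^ q.den * (round (r - s) : ℝ) + (b : ℝ) ^ q.den * t := by
        rw [ht, habs]; ring
      rw [this, hint]; push_cast; ring
    · apply hnb q.den ((b : ℕ) ^ q.den * round (r - s) - c * q.num)
      have : (b : ℝ) ^ q.den * (r - s) =
          (b : ℝ) ^ q.den * (round (r - s) : ℝ) - (b : ℝ) ^ q.den * t := by
        rw [ht, habs]; ring
      rw [this, hint]; push_cast; ring
  push_neg at key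
  obtain ⟨p, hp, hpq, hpb⟩ := key
  refine ⟨p, hp, hpq, hpb, ?_⟩
  -- Step 2: regulating periods form a group
  have hφz : ∀ (z : ℤ) (x : ℝ), φ (x + z) = φ x := by
    have : Function.Periodic φ 1 := hφp
    intro z x
    simpa using (this.int_mul z) x
  have hW1 : ∀ x : ℝ, W (x + 1) = W x := by
    intro x
    rw [hW, hW]
    congr 1
    funext n
    have : (b : ℝ) ^ n * (x + 1) = (b : ℝ) ^ n * x + ((b ^ n : ℤ) : ℝ) := by push_cast; ring
    rw [this, hφz]
  let S : AddSubgroup ℝ :=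
  { carrier := {a | ContDiff ℝ k (fun x => W (x + a) - W x)}
    zero_mem' := by
      simp only [Set.mem_setOf_eq, add_zero, sub_self]
      exact contDiff_const
    add_mem' := by
      intro a c ha hc
      simp only [Set.mem_setOf_eq] at *
      have : (fun x => W (x + (a + c)) - W x)
          = (fun x => (W ((x + c) + a) - W (x + c)) + (W (x + c) - W x)) := by
        funext x; ring_nf
      rw [this]
      exact ((ha.comp (contDiff_id.add contDiff_const)).add hc)
    neg_mem' := by
      intro a ha
      simp only [Set.mem_setOf_eq] at *
      have : (fun x => W (x + -a) - W x)
          = (fun x => -((fun y => W (y + a) - W y) ((x : ℝ) + -a))) := by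
        funext x
        show W (x + -a) - W x = -(W ((x + -a) + a) - W (x + -a))
        have hx : x + -a + a = x := by ring
        rw [hx]; ring
      rw [this]
      exact (ha.comp (contDiff_id.add contDiff_const)).neg }
  have htS : t ∈ S := hreg
  have h1S : (1 : ℝ) ∈ S := by
    show ContDiff ℝ k (fun x => W (x + 1) - W x)
    have : (fun x : ℝ => W (x + 1) - W x) = fun _ => 0 := by
      funext x; rw [hW1]; ring
    rw [this]; exact contDiff_const
  -- 1/q.den ∈ S via Bezout
  have hcop : Int.gcd q.num q.den = 1 := q.reduced
  have hbez : ∃ a c : ℤ, a * q.num + c * q.den = 1 := by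
    refine ⟨Int.gcdA q.num q.den, Int.gcdB q.num q.den, ?_⟩
    have := Int.gcd_eq_gcd_ab q.num (q.den : ℤ)
    rw [hcop] at this
    push_cast at this
    linarith [this]
  obtain ⟨a, c, hac⟩ := hbez
  have hdenS : (1 : ℝ) / q.den ∈ S := by
    have h1 : a • t + c • (1 : ℝ) ∈ S := S.add_mem (S.zsmul_mem htS a) (S.zsmul_mem h1S c)
    have h2 : a • t + c • (1 : ℝ) = 1 / q.den := by
      rw [zsmul_eq_mul, zsmul_eq_mul, htq, mul_one]
      have hq : (q : ℝ) = (q.num : ℝ) / (q.den : ℝ) := by rw [Rat.cast_def]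
      have hden : ((q.den : ℝ)) ≠ 0 := by positivity
      rw [hq]
      field_simp
      have : ((a * q.num + c * q.den : ℤ) : ℝ) = ((1 : ℤ) : ℝ) := by rw [hac]
      push_cast at this
      linarith [this]
    rwa [h2] at h1
  -- 1/p = (q.den / p) • (1/q.den)
  obtain ⟨d, hd⟩ := hpq
  have hdpos : 0 < d := by
    rcases Nat.eq_zero_or_pos d with h0 | h0
    · rw [h0, Nat.mul_zero] at hd; omega
    · exact h0
  have hfin : (1 : ℝ) / p ∈ S := by
    have h1 : (d : ℤ) • ((1 : ℝ) / q.den) ∈ S := S.zsmul_mem hdenS d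
    have h2 : (d : ℤ) • ((1 : ℝ) / q.den) = 1 / p := by
      rw [zsmul_eq_mul]
      have hpne : ((p : ℝ)) ≠ 0 := by
        have := hp.pos; positivity
      have hdne : ((d : ℝ)) ≠ 0 := by positivity
      rw [hd]
      push_cast
      field_simp
    rwa [h2] at h1
  exact hfin
end

section
/- Let b ≥ 2 be an integer and p > 1 an integer. For a ℤ-periodic C^5 function φ with Fourier coefficients c_k, define the pre-renormalization R̃_p φ(x) = ∑_{k∈ℤ} c_{kp} e^{2πikpx}. If 1/p is a regulating period of W^φ — i.e., x ↦ W^φ(x + 1/p) − W^φ(x) is C³ — then W^{φ − R̃_p φ}(x + 1/p) − W^{φ − R̃_p φ}(x) = W^φ(x + 1/p) − W^φ(x) for all x ∈ ℝ, where W^ψ(x) = ∑_{n≥0} λ^n ψ(b^n x) for λ ∈ (1/b,1). -/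
/-- Pre-renormalization: if `1/p` is a C³-regulating period of `W^φ`, then
`W^{φ - R̃ₚφ}(x + 1/p) - W^{φ - R̃ₚφ}(x) = W^φ(x + 1/p) - W^φ(x)` where
`R̃ₚφ(x) = ∑ₖ c_{kp} e^{2πikpx}`. -/
theorem stmt_19 (b : ℕ) (hb : 2 ≤ b) (p : ℕ) (hp : 1 < p)
    (lam : ℝ) (hlam : 1 / b < lam ∧ lam < 1)
    (φ : ℝ → ℝ) (hφ : ContDiff ℝ 5 φ) (hφp : ∀ x, φ (x + 1) = φ x)
    (c : ℤ → ℂ)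
    (hc : ∀ k : ℤ, c k = ∫ x in (0:ℝ)..1, (φ x : ℂ) *
      Complex.exp (-(2 * (Real.pi : ℂ) * Complex.I * (k : ℂ) * (x : ℂ))))
    (Rφ : ℝ → ℝ)
    (hR : ∀ x : ℝ, Rφ x = (∑' k : ℤ, c (k * p) *
      Complex.exp (2 * (Real.pi : ℂ) * Complex.I * (k : ℂ) * (p : ℂ) * (x : ℂ))).re)
    (Wφ Wψ : ℝ → ℝ)
    (hWφ : ∀ x, Wφ x = ∑' n : ℕ, lam ^ n * φ ((b : ℝ) ^ n * x))
    (hWψ : ∀ x, Wψ x = ∑' n : ℕ, lam ^ n * (φ ((b : ℝ) ^ n * x) - Rφ ((b : ℝ) ^ n * x)))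
    (hreg : ContDiff ℝ 3 (fun x => Wφ (x + 1 / (p : ℝ)) - Wφ x)) :
    ∀ x : ℝ, Wψ (x + 1 / (p : ℝ)) - Wψ x = Wφ (x + 1 / (p : ℝ)) - Wφ x := by
  intro x
  have hp0 : (0:ℝ) < p := by positivity
  have hlam0 : 0 ≤ lam := le_of_lt (lt_trans (by positivity : (0:ℝ) < 1 / b) hlam.1)
  -- norm of the exponential is 1
  have hnorm : ∀ (k : ℤ) (y : ℝ),
      ‖Complex.exp (2 * (Real.pi : ℂ) * Complex.I * (k : ℂ) * (p : ℂ) * (y : ℂ))‖ = 1 := by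
    intro k y
    rw [Complex.norm_exp]
    have : (2 * (Real.pi : ℂ) * Complex.I * (k : ℂ) * (p : ℂ) * (y : ℂ)).re = 0 := by
      simp [Complex.ext_iff]
    rw [this, Real.exp_zero]
  -- Rφ is invariant under shift by m / p for integers m
  have hRshift : ∀ (y : ℝ) (m : ℤ), Rφ (y + m / p) = Rφ y := by
    intro y m
    rw [hR, hR]
    congr 1
    apply tsum_congr
    intro k
    congr 1
    have : (2 * (Real.pi : ℂ) * Complex.I * (k : ℂ) * (p : ℂ) * ((y + m / p : ℝ) : ℂ))
        = 2 * (Real.pi : ℂ) * Complex.I * (k : ℂ) * (p : ℂ) * (y : ℂ)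
          + (↑(k * m) : ℤ) * (2 * (Real.pi : ℂ) * Complex.I) := by
      have hpC : (p:ℂ) ≠ 0 := Nat.cast_ne_zero.2 (by omega)
      push_cast
      field_simp
    rw [this, Complex.exp_add, Complex.exp_int_mul_two_pi_mul_I, mul_one]
  have hshift : ∀ n : ℕ, Rφ ((b:ℝ)^n * (x + 1/p)) = Rφ ((b:ℝ)^n * x) := by
    intro n
    have : (b:ℝ)^n * (x + 1/p) = (b:ℝ)^n * x + ((b:ℤ)^n : ℤ) / p := by
      push_cast; ring
    rw [this, hRshift]
  -- φ is bounded
  have hper : Function.Periodic φ 1 := hφp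
  obtain ⟨M, hM⟩ : ∃ M, ∀ y, ‖φ y‖ ≤ M := by
    obtain ⟨C, hC⟩ := (isBounded_iff_forall_norm_le).1
      (hper.isBounded_of_continuous one_ne_zero hφ.continuous)
    exact ⟨C, fun y => hC _ (Set.mem_range_self y)⟩
  have hgeom : Summable fun n : ℕ => lam ^ n := summable_geometric_of_lt_one hlam0 hlam.2
  have hsF : ∀ y : ℝ, Summable (fun n : ℕ => lam ^ n * φ ((b:ℝ)^n * y)) := by
    intro y
    apply Summable.of_norm_bounded (hgeom.mul_right M)
    intro n
    rw [norm_mul, Real.norm_of_nonneg (pow_nonneg hlam0 n)]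
    exact mul_le_mul_of_nonneg_left (hM _) (pow_nonneg hlam0 n)
  by_cases hS : Summable (fun k : ℤ => ‖c (k * p)‖)
  · -- Rφ is bounded by B = ∑' ‖c (k p)‖
    set B : ℝ := ∑' k : ℤ, ‖c (k * p)‖ with hB
    have hRb : ∀ y : ℝ, ‖Rφ y‖ ≤ B := by
      intro y
      rw [hR]
      calc ‖(∑' k : ℤ, c (k * p) *
          Complex.exp (2 * (Real.pi : ℂ) * Complex.I * (k : ℂ) * (p : ℂ) * (y : ℂ))).re‖
          ≤ ‖∑' k : ℤ, c (k * p) *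
            Complex.exp (2 * (Real.pi : ℂ) * Complex.I * (k : ℂ) * (p : ℂ) * (y : ℂ))‖ :=
            Complex.abs_re_le_norm _
        _ ≤ ∑' k : ℤ, ‖c (k * p) *
            Complex.exp (2 * (Real.pi : ℂ) * Complex.I * (k : ℂ) * (p : ℂ) * (y : ℂ))‖ := by
            apply norm_tsum_le_tsum_norm
            simpa [norm_mul, hnorm] using hS
        _ = B := by simp [norm_mul, hnorm, hB]
    have hsR : ∀ y : ℝ, Summable (fun n : ℕ => lam ^ n * Rφ ((b:ℝ)^n * y)) := by
      intro y
      apply Summable.of_norm_bounded (hgeom.mul_right B)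
      intro n
      rw [norm_mul, Real.norm_of_nonneg (pow_nonneg hlam0 n)]
      exact mul_le_mul_of_nonneg_left (hRb _) (pow_nonneg hlam0 n)
    have key : ∀ y : ℝ, Wψ y = Wφ y - ∑' n : ℕ, lam ^ n * Rφ ((b:ℝ)^n * y) := by
      intro y
      rw [hWψ, hWφ]
      rw [← Summable.tsum_sub (hsF y) (hsR y)]
      apply tsum_congr
      intro n
      ring
    rw [key, key]
    have : (∑' n : ℕ, lam ^ n * Rφ ((b:ℝ)^n * (x + 1/(p:ℝ))))
        = ∑' n : ℕ, lam ^ n * Rφ ((b:ℝ)^n * x) := tsum_congr fun n => by rw [hshift]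
    rw [this]
    ring
  · -- the Fourier series is nowhere summable, so Rφ = 0
    have hR0 : ∀ y : ℝ, Rφ y = 0 := by
      intro y
      rw [hR]
      rw [tsum_eq_zero_of_not_summable]
      · simp
      · intro h
        apply hS
        have := h.norm
        simpa [norm_mul, hnorm] using this
    have : ∀ y, Wψ y = Wφ y := by
      intro y
      rw [hWψ, hWφ]
      simp [hR0]
    rw [this, this]
end
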